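/- Let I ⊆ 𝒜 = ℝ⟨x,x*⟩ be a left ideal generated by polynomials of degree ≤ d, and let G ⊆ 𝒜^H_d be a subspace with 𝒜^H_d = I^ℓ_d ⊕ G. Then for every D ≥ d, (I + I*)^ℓ_{2D} = [(I^ℓ_d)* 𝒜^H_{2(D−d)} I^ℓ_d] ⊕ [G* 𝒜^H_{2(D−d)} I^ℓ_d] ⊕ [(I^ℓ_d)* 𝒜^H_{2(D−d)} G] (an internal direct sum of subspaces of 𝒜^H_{2D}); consequently 𝒜^H_{2D} = (I + I*)^ℓ_{2D} ⊕ [G* 𝒜^H_{2(D−d)} G]. -/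

import Mathlib

open Matrix

noncomputable section

/-- The free `*`-algebra `ℝ⟨x,x*⟩` on `g` variables: the free algebra on the `2g`
generators `x₁,…,x_g` (`Sum.inl`) and `x₁*,…,x_g*` (`Sum.inr`). -/
abbrev FA (g : ℕ) := FreeAlgebra ℝ (Fin g ⊕ Fin g)

/-- The involution on the free `*`-algebra: the unique `ℝ`-linear map reversing products
and interchanging `xᵢ` and `xᵢ*`, as a linear map. -/
def fstarL (g : ℕ) : FA g →ₗ[ℝ] FA g :=
  ((MulOpposite.opLinearEquiv ℝ).symm.toLinearMap).comp
    (FreeAlgebra.lift ℝ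
      (fun i : Fin g ⊕ Fin g => MulOpposite.op (FreeAlgebra.ι ℝ (Sum.swap i)))).toLinearMap

/-- The involution `p ↦ p*` on the free `*`-algebra. -/
def fstar {g : ℕ} (p : FA g) : FA g := fstarL g p

/-- A left ideal `I` is real if whenever `∑ᵢ aᵢ* aᵢ ∈ I + I*`, every `aᵢ ∈ I`. -/
def IsRealIdeal {g : ℕ} (I : Submodule (FA g) (FA g)) : Prop :=
  ∀ (r : ℕ) (a : Fin r → FA g),
    (∃ u ∈ I, ∃ w ∈ I, (∑ i, fstar (a i) * a i) = u + fstar w) → ∀ i, a i ∈ I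

/-- The real radical: the smallest real left ideal containing `I`. -/
def rr {g : ℕ} (I : Submodule (FA g) (FA g)) : Submodule (FA g) (FA g) :=
  sInf {J | IsRealIdeal J ∧ I ≤ J}

/-- The identification of the free algebra with the monoid algebra on words. -/
def toMA {g : ℕ} : FA g ≃ₐ[ℝ] MonoidAlgebra ℝ (FreeMonoid (Fin g ⊕ Fin g)) :=
  FreeAlgebra.equivMonoidAlgebraFreeMonoid

/-- `𝒜_d`: the subspace of polynomials of degree at most `d`. -/
def Adeg (g d : ℕ) : Submodule ℝ (FA g) :=
  (MonoidAlgebra.supported ℝ ℝ {w : FreeMonoid (Fin g ⊕ Fin g) | w.length ≤ d}).comap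
    (toMA (g := g)).toLinearMap

/-- `𝒜^H_d`: the subspace of homogeneous polynomials of degree `d` (together with `0`). -/
def AdegH (g d : ℕ) : Submodule ℝ (FA g) :=
  (MonoidAlgebra.supported ℝ ℝ {w : FreeMonoid (Fin g ⊕ Fin g) | w.length = d}).comap
    (toMA (g := g)).toLinearMap

/-- The degree of a polynomial: the maximal length of a word occurring in it
(`0` for the zero polynomial). -/
def deg {g : ℕ} (p : FA g) : ℕ :=
  (toMA (g := g) p).coeff.support.sup FreeMonoid.length

/-- The leading polynomial: the homogeneous component of top degree. -/
def lead {g : ℕ} (p : FA g) : FA g :=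
  (toMA (g := g)).symm (MonoidAlgebra.ofCoeff ((toMA (g := g) p).coeff.filter (fun w => FreeMonoid.length w = deg p)))

/-- `V^ℓ_d`: the span of leading polynomials of all degree-`d` elements of `V`. -/
def ellSet {g : ℕ} (V : Submodule ℝ (FA g)) (d : ℕ) : Submodule ℝ (FA g) :=
  Submodule.span ℝ {q | ∃ p ∈ V, p ≠ 0 ∧ deg p = d ∧ q = lead p}


-- ===================== Auxiliary development =====================

open MonoidAlgebra Finsupp

namespace Stmt8Aux

variable {g : ℕ}

/-- word abbreviation -/
abbrev W (g : ℕ) := FreeMonoid (Fin g ⊕ Fin g)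

instance instCoeFunMAcoeff {R M : Type*} [Semiring R] : CoeFun (MonoidAlgebra R M) (fun _ => M → R) :=
  ⟨fun x => x.coeff⟩

/-- monomial with coefficient -/
def mwc (w : W g) (c : ℝ) : FA g := (toMA (g := g)).symm (MonoidAlgebra.single w c)

lemma toMA_mwc (w : W g) (c : ℝ) : toMA (mwc w c) = MonoidAlgebra.single w c := by
  simp [mwc]

lemma mwc_mul_mwc (w v : W g) (c e : ℝ) : mwc w c * mwc v e = mwc (w * v) (c * e) := by
  simp only [mwc]
  rw [← _root_.map_mul]
  congr 1
  exact MonoidAlgebra.single_mul_single _ _ _ _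

lemma smul_mwc (c : ℝ) (w : W g) : c • mwc w 1 = mwc w c := by
  simp only [mwc, ← _root_.map_smul]
  congr 1
  rw [MonoidAlgebra.smul_single', mul_one]

lemma mwc_one : (mwc (1 : W g) 1) = 1 := by
  simp only [mwc]
  rw [← _root_.map_one (toMA (g:=g)).symm]
  congr 1

/-- every element is a finite sum of monomials -/
lemma eq_sum_mwc (p : FA g) : p = (toMA p).coeff.sum (fun w c => mwc w c) := by
  apply (toMA (g := g)).injective
  rw [map_finsuppSum]
  simp only [mwc, AlgEquiv.apply_symm_apply]
  exact (MonoidAlgebra.sum_coeff_single _).symm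

lemma mem_Adeg_iff {p : FA g} {D : ℕ} :
    p ∈ Adeg g D ↔ ∀ w : W g, D < w.length → toMA p w = 0 := by
  simp only [Adeg, Submodule.mem_comap, AlgEquiv.toLinearMap_apply, MonoidAlgebra.mem_supported,
    Set.subset_def, Finset.mem_coe, Finsupp.mem_support_iff, Set.mem_setOf_eq]
  constructor
  · intro h w hw
    by_contra hne
    exact absurd (h w hne) (by omega)
  · intro h w hne
    by_contra hc
    exact hne (h w (by omega))

lemma mem_AdegH_iff {p : FA g} {e : ℕ} :
    p ∈ AdegH g e ↔ ∀ w : W g, w.length ≠ e → toMA p w = 0 := by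
  simp only [AdegH, Submodule.mem_comap, AlgEquiv.toLinearMap_apply, MonoidAlgebra.mem_supported,
    Set.subset_def, Finset.mem_coe, Finsupp.mem_support_iff, Set.mem_setOf_eq]
  constructor
  · intro h w hw
    by_contra hne
    exact hw (h w hne)
  · intro h w hne
    by_contra hc
    exact hne (h w hc)

lemma deg_le_iff {p : FA g} {D : ℕ} : deg p ≤ D ↔ p ∈ Adeg g D := by
  rw [mem_Adeg_iff, deg]
  constructor
  · intro h w hw
    by_contra hc
    have : w ∈ (toMA (g := g) p).coeff.support := Finsupp.mem_support_iff.mpr hc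
    have := Finset.le_sup (f := FreeMonoid.length) this
    omega
  · intro h
    apply Finset.sup_le
    intro w hw
    by_contra hc
    exact (Finsupp.mem_support_iff.mp hw) (h w (by omega))

lemma mem_Adeg_deg (p : FA g) : p ∈ Adeg g (deg p) := deg_le_iff.mp le_rfl

lemma Adeg_mono {D D' : ℕ} (h : D ≤ D') : Adeg g D ≤ Adeg g D' := by
  intro p hp
  rw [mem_Adeg_iff] at *
  intro w hw
  exact hp w (by omega)

lemma AdegH_le_Adeg {e : ℕ} : AdegH g e ≤ Adeg g e := by
  intro p hp
  rw [mem_Adeg_iff]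
  rw [mem_AdegH_iff] at hp
  intro w hw
  exact hp w (by omega)

/-- homogeneous component -/
def hc (e : ℕ) (p : FA g) : FA g :=
  (toMA (g := g)).symm (MonoidAlgebra.ofCoeff ((toMA (g := g) p).coeff.filter (fun w => FreeMonoid.length w = e)))

lemma toMA_hc (e : ℕ) (p : FA g) (w : W g) :
    toMA (hc e p) w = if w.length = e then toMA p w else 0 := by
  simp [hc, Finsupp.filter_apply]

lemma toMA_add_apply (p q : FA g) (w : W g) : toMA (p + q) w = toMA p w + toMA q w := by
  rw [_root_.map_add]; rfl

lemma toMA_smul_apply (c : ℝ) (p : FA g) (w : W g) : toMA (c • p) w = c * toMA p w := by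
  rw [_root_.map_smul]; rfl

lemma lead_eq_hc (p : FA g) : lead p = hc (deg p) p := rfl

lemma hc_mem_AdegH (e : ℕ) (p : FA g) : hc e p ∈ AdegH g e := by
  rw [mem_AdegH_iff]
  intro w hw
  rw [toMA_hc, if_neg hw]

lemma hc_add (e : ℕ) (p q : FA g) : hc e (p + q) = hc e p + hc e q := by
  apply (toMA (g := g)).injective
  ext w
  rw [toMA_add_apply, toMA_hc, toMA_hc, toMA_hc, toMA_add_apply]
  split <;> simp

lemma hc_smul (e : ℕ) (c : ℝ) (p : FA g) : hc e (c • p) = c • hc e p := by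
  apply (toMA (g := g)).injective
  ext w
  rw [toMA_smul_apply, toMA_hc, toMA_hc, toMA_smul_apply]
  split <;> simp

lemma hc_zero (e : ℕ) : hc e (0 : FA g) = 0 := by
  apply (toMA (g := g)).injective
  ext w
  simp [toMA_hc]

lemma hc_of_mem_AdegH {e : ℕ} {p : FA g} (h : p ∈ AdegH g e) : hc e p = p := by
  apply (toMA (g := g)).injective
  ext w
  rw [toMA_hc]
  rw [mem_AdegH_iff] at h
  by_cases hw : w.length = e
  · rw [if_pos hw]
  · rw [if_neg hw, h w hw]

lemma hc_eq_zero_of_ne {e e' : ℕ} {p : FA g} (h : p ∈ AdegH g e) (hne : e' ≠ e) :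
    hc e' p = 0 := by
  apply (toMA (g := g)).injective
  ext w
  rw [toMA_hc]
  rw [mem_AdegH_iff] at h
  by_cases hw : w.length = e'
  · rw [if_pos hw, h w (by omega)]; simp
  · rw [if_neg hw]; simp

lemma hc_eq_zero_of_lt {D e : ℕ} {p : FA g} (h : p ∈ Adeg g D) (hlt : D < e) :
    hc e p = 0 := by
  apply (toMA (g := g)).injective
  ext w
  rw [toMA_hc]
  rw [mem_Adeg_iff] at h
  by_cases hw : w.length = e
  · rw [if_pos hw, h w (by omega)]; simp
  · rw [if_neg hw]; simp

lemma exists_word_deg {p : FA g} (hp : p ≠ 0) :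
    ∃ w : W g, toMA p w ≠ 0 ∧ w.length = deg p := by
  have hne : (toMA (g := g) p).coeff.support.Nonempty := by
    rw [Finsupp.support_nonempty_iff]
    exact fun h0 => hp (by simpa using h0)
  obtain ⟨w, hw, hsup⟩ := Finset.exists_mem_eq_sup _ hne FreeMonoid.length
  exact ⟨w, Finsupp.mem_support_iff.mp hw, hsup.symm⟩

lemma lead_ne_zero {p : FA g} (hp : p ≠ 0) : lead p ≠ 0 := by
  obtain ⟨w, hw, hl⟩ := exists_word_deg hp
  intro hc0
  rw [lead_eq_hc] at hc0
  have := toMA_hc (deg p) p w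
  rw [hc0] at this
  simp only [_root_.map_zero, MonoidAlgebra.coeff_zero, Finsupp.coe_zero, Pi.zero_apply] at this
  rw [if_pos hl] at this
  exact hw this.symm

lemma lead_mem_AdegH (p : FA g) : lead p ∈ AdegH g (deg p) := hc_mem_AdegH _ _

lemma deg_of_mem_AdegH {e : ℕ} {p : FA g} (h : p ∈ AdegH g e) (hp : p ≠ 0) : deg p = e := by
  obtain ⟨w, hw, hl⟩ := exists_word_deg hp
  rw [mem_AdegH_iff] at h
  by_contra hne
  exact hw (h w (by omega))

lemma lead_of_mem_AdegH {e : ℕ} {p : FA g} (h : p ∈ AdegH g e) (hp : p ≠ 0) : lead p = p := by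
  rw [lead_eq_hc, deg_of_mem_AdegH h hp, hc_of_mem_AdegH h]

lemma hc_deg_eq_lead (p : FA g) : hc (deg p) p = lead p := rfl

/-- decomposition of an element into homogeneous components up to its degree bound -/
lemma sum_hc {p : FA g} {D : ℕ} (h : p ∈ Adeg g D) :
    p = ∑ e ∈ Finset.range (D + 1), hc e p := by
  apply (toMA (g := g)).injective
  rw [_root_.map_sum]
  ext w
  rw [MonoidAlgebra.coeff_sum, Finset.sum_apply']
  simp only [toMA_hc]
  rw [mem_Adeg_iff] at h
  by_cases hw : w.length ≤ D
  · rw [Finset.sum_eq_single w.length]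
    · simp
    · intro b _ hb; exact if_neg (fun hh => hb hh.symm) -- w.length = b?
    · intro hnb; exact absurd (Finset.mem_range.mpr (by omega)) hnb
  · rw [h w (by omega)]
    apply (Finset.sum_eq_zero ?_).symm
    intro e he
    rw [Finset.mem_range] at he
    exact if_neg (by omega)

end Stmt8Aux

namespace Stmt8Aux

open scoped Classical

variable {g : ℕ}

lemma word_split {a b u v : W g} (h : a * b = u * v) (hl : a.length = u.length) :
    a = u ∧ b = v := by
  have h' : a.toList ++ b.toList = u.toList ++ v.toList := congrArg FreeMonoid.toList h
  have := List.append_inj h' hl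
  exact ⟨FreeMonoid.toList.injective this.1, FreeMonoid.toList.injective this.2⟩

lemma word_split' {a b u v : W g} (h : a * b = u * v) (hl : b.length = v.length) :
    a = u ∧ b = v := by
  have h' : a.toList ++ b.toList = u.toList ++ v.toList := congrArg FreeMonoid.toList h
  have := List.append_inj' h' hl
  exact ⟨FreeMonoid.toList.injective this.1, FreeMonoid.toList.injective this.2⟩

lemma supp_len_of_AdegH {p : FA g} {e : ℕ} (hp : p ∈ AdegH g e) {w : W g}
    (hw : toMA p w ≠ 0) : w.length = e := by
  rw [mem_AdegH_iff] at hp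
  by_contra hc
  exact hw (hp w hc)

lemma supp_len_of_Adeg {p : FA g} {D : ℕ} (hp : p ∈ Adeg g D) {w : W g}
    (hw : toMA p w ≠ 0) : w.length ≤ D := by
  rw [mem_Adeg_iff] at hp
  by_contra hc
  exact hw (hp w (by omega))

private lemma inner_sum (F : W g →₀ ℝ) (b₁ : ℝ) (a₁ u v : W g)
    (h : ∀ a₂ ∈ F.support, a₁ * a₂ = u * v → a₁ = u) :
    (F.sum fun a₂ b₂ => if a₁ * a₂ = u * v then b₁ * b₂ else 0)
      = if a₁ = u then b₁ * F v else 0 := by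
  classical
  by_cases ha : a₁ = u
  · subst ha
    rw [if_pos rfl]
    have hcong : ∀ a₂ ∈ F.support, (if a₁ * a₂ = a₁ * v then b₁ * F a₂ else 0) =
        (if a₂ = v then b₁ * F a₂ else 0) := by
      intro a₂ _
      congr 1
      simp [mul_left_cancel_iff]
    rw [Finsupp.sum_congr (g2 := fun x b₂ => if x = v then b₁ * b₂ else 0) hcong]
    rw [Finsupp.sum_ite_eq' F v (fun _ b₂ => b₁ * b₂)]
    split
    · rfl
    · rw [Finsupp.notMem_support_iff.mp ‹_›, mul_zero]
  · rw [if_neg ha, Finsupp.sum]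
    apply Finset.sum_eq_zero
    intro a₂ ha₂
    rw [if_neg (fun hcond => ha (h a₂ ha₂ hcond))]

lemma mul_coeff_left {p : FA g} {e : ℕ} (hp : p ∈ AdegH g e) (q : FA g) {u : W g}
    (hu : u.length = e) (v : W g) :
    toMA (p * q) (u * v) = toMA p u * toMA q v := by
  classical
  have hm : toMA (g := g) (p * q) = toMA p * toMA q := _root_.map_mul _ _ _
  rw [hm, MonoidAlgebra.coeff_mul]
  have : ∀ a₁ ∈ (toMA p).coeff.support,
      ((toMA q).coeff.sum fun a₂ b₂ => if a₁ * a₂ = u * v then (toMA p) a₁ * b₂ else 0)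
        = if a₁ = u then (toMA p) a₁ * toMA q v else 0 := by
    intro a₁ ha₁
    apply inner_sum
    intro a₂ _ hcond
    exact (word_split hcond (by
      rw [supp_len_of_AdegH hp (Finsupp.mem_support_iff.mp ha₁), hu])).1
  rw [Finsupp.sum_congr (g2 := fun x b₁ => if x = u then b₁ * toMA q v else 0) this]
  rw [Finsupp.sum_ite_eq' (toMA p).coeff u (fun _ b₁ => b₁ * toMA q v)]
  split
  · rfl
  · rw [Finsupp.notMem_support_iff.mp ‹_›, zero_mul]

lemma mul_coeff_right (p : FA g) {q : FA g} {e : ℕ} (hq : q ∈ AdegH g e) (u : W g) {v : W g}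
    (hv : v.length = e) :
    toMA (p * q) (u * v) = toMA p u * toMA q v := by
  classical
  have hm : toMA (g := g) (p * q) = toMA p * toMA q := _root_.map_mul _ _ _
  rw [hm, MonoidAlgebra.coeff_mul]
  have : ∀ a₁ ∈ (toMA p).coeff.support,
      ((toMA q).coeff.sum fun a₂ b₂ => if a₁ * a₂ = u * v then (toMA p) a₁ * b₂ else 0)
        = if a₁ = u then (toMA p) a₁ * toMA q v else 0 := by
    intro a₁ _
    apply inner_sum
    intro a₂ ha₂ hcond
    exact (word_split' hcond (by
      rw [supp_len_of_AdegH hq (Finsupp.mem_support_iff.mp ha₂), hv])).1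
  rw [Finsupp.sum_congr (g2 := fun x b₁ => if x = u then b₁ * toMA q v else 0) this]
  rw [Finsupp.sum_ite_eq' (toMA p).coeff u (fun _ b₁ => b₁ * toMA q v)]
  split
  · rfl
  · rw [Finsupp.notMem_support_iff.mp ‹_›, zero_mul]

/-- coefficients of a product are supported on products of support words -/
lemma mul_coeff_ne_zero {p q : FA g} {z : W g} (h : toMA (p * q) z ≠ 0) :
    ∃ u v : W g, z = u * v ∧ toMA p u ≠ 0 ∧ toMA q v ≠ 0 := by
  classical
  have hz : z ∈ (toMA (p * q)).coeff.support := Finsupp.mem_support_iff.mpr h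
  have hm : toMA (g := g) (p * q) = toMA p * toMA q := _root_.map_mul _ _ _
  rw [hm] at hz
  have := MonoidAlgebra.support_coeff_mul_subset (toMA p) (toMA q) hz
  rw [Finset.mem_mul] at this
  obtain ⟨u, hu, v, hv, huv⟩ := this
  exact ⟨u, v, huv.symm, Finsupp.mem_support_iff.mp hu, Finsupp.mem_support_iff.mp hv⟩

lemma mul_mem_Adeg {p q : FA g} {a b : ℕ} (hp : p ∈ Adeg g a) (hq : q ∈ Adeg g b) :
    p * q ∈ Adeg g (a + b) := by
  rw [mem_Adeg_iff]
  intro w hw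
  by_contra hne
  obtain ⟨u, v, rfl, hu, hv⟩ := mul_coeff_ne_zero hne
  have := supp_len_of_Adeg hp hu
  have := supp_len_of_Adeg hq hv
  rw [FreeMonoid.length_mul] at hw
  omega

lemma mul_mem_AdegH {p q : FA g} {a b : ℕ} (hp : p ∈ AdegH g a) (hq : q ∈ AdegH g b) :
    p * q ∈ AdegH g (a + b) := by
  rw [mem_AdegH_iff]
  intro w hw
  by_contra hne
  obtain ⟨u, v, rfl, hu, hv⟩ := mul_coeff_ne_zero hne
  have := supp_len_of_AdegH hp hu
  have := supp_len_of_AdegH hq hv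
  rw [FreeMonoid.length_mul] at hw
  omega

lemma homog_mul_ne_zero {p q : FA g} {e : ℕ} (hp : p ∈ AdegH g e) (hp0 : p ≠ 0)
    (hq0 : q ≠ 0) : p * q ≠ 0 := by
  obtain ⟨u, hu, _⟩ := exists_word_deg hp0
  obtain ⟨v, hv, _⟩ := exists_word_deg hq0
  intro h0
  have := mul_coeff_left hp q (supp_len_of_AdegH hp hu) v
  rw [h0] at this
  simp only [_root_.map_zero, MonoidAlgebra.coeff_zero, Finsupp.coe_zero, Pi.zero_apply] at this
  exact mul_ne_zero hu hv this.symm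

lemma homog_mul_ne_zero' {p q : FA g} {e : ℕ} (hq : q ∈ AdegH g e) (hp0 : p ≠ 0)
    (hq0 : q ≠ 0) : p * q ≠ 0 := by
  obtain ⟨u, hu, _⟩ := exists_word_deg hp0
  obtain ⟨v, hv, _⟩ := exists_word_deg hq0
  intro h0
  have := mul_coeff_right p hq u (supp_len_of_AdegH hq hv)
  rw [h0] at this
  simp only [_root_.map_zero, MonoidAlgebra.coeff_zero, Finsupp.coe_zero, Pi.zero_apply] at this
  exact mul_ne_zero hu hv this.symm

/-- take and drop on words -/
def tk (e : ℕ) (w : W g) : W g := FreeMonoid.ofList (w.toList.take e)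
def dr (e : ℕ) (w : W g) : W g := FreeMonoid.ofList (w.toList.drop e)

lemma tk_mul_dr (e : ℕ) (w : W g) : tk e w * dr e w = w := by
  apply FreeMonoid.toList.injective
  exact List.take_append_drop e w.toList

lemma tk_len {e : ℕ} {w : W g} (h : e ≤ w.length) : (tk e w).length = e := by
  simp only [tk]
  exact (List.length_take).trans (by exact min_eq_left h)

lemma dr_len (e : ℕ) (w : W g) : (dr e w).length = w.length - e := by
  simp only [dr]
  exact List.length_drop

lemma hc_mul_left {p : FA g} {e : ℕ} (hp : p ∈ AdegH g e) (q : FA g) {N : ℕ} (hN : e ≤ N) :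
    hc N (p * q) = p * hc (N - e) q := by
  apply (toMA (g := g)).injective
  ext w
  rw [toMA_hc]
  by_cases hw : e ≤ w.length
  · obtain ⟨u, v, huv, hul⟩ : ∃ u v : W g, w = u * v ∧ u.length = e :=
      ⟨tk e w, dr e w, (tk_mul_dr e w).symm, tk_len hw⟩
    subst huv
    rw [FreeMonoid.length_mul] at hw ⊢
    rw [mul_coeff_left hp q hul v, mul_coeff_left hp (hc (N-e) q) hul v, toMA_hc]
    by_cases hwN : u.length + v.length = N
    · rw [if_pos hwN, if_pos (by omega)]
    · rw [if_neg hwN, if_neg (by omega), mul_zero]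
  · have hz : ∀ q' : FA g, toMA (p * q') w = 0 := by
      intro q'
      by_contra hne
      obtain ⟨u, v, rfl, hu, _⟩ := mul_coeff_ne_zero hne
      have := supp_len_of_AdegH hp hu
      rw [FreeMonoid.length_mul] at hw
      omega
    rw [hz (hc (N - e) q)]
    split
    · exact hz q
    · rfl

lemma hc_mul_right (p : FA g) {q : FA g} {e : ℕ} (hq : q ∈ AdegH g e) {N : ℕ} (hN : e ≤ N) :
    hc N (p * q) = hc (N - e) p * q := by
  apply (toMA (g := g)).injective
  ext w
  rw [toMA_hc]
  by_cases hw : e ≤ w.length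
  · obtain ⟨u, v, huv, hvl⟩ : ∃ u v : W g, w = u * v ∧ v.length = e :=
      ⟨tk (w.length - e) w, dr (w.length - e) w, (tk_mul_dr _ w).symm,
        by rw [dr_len]; omega⟩
    subst huv
    rw [FreeMonoid.length_mul] at hw ⊢
    rw [mul_coeff_right p hq u hvl, mul_coeff_right (hc (N-e) p) hq u hvl, toMA_hc]
    by_cases hwN : u.length + v.length = N
    · rw [if_pos hwN, if_pos (by omega)]
    · rw [if_neg hwN, if_neg (by omega), zero_mul]
  · have hz : ∀ p' : FA g, toMA (p' * q) w = 0 := by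
      intro p'
      by_contra hne
      obtain ⟨u, v, rfl, _, hv⟩ := mul_coeff_ne_zero hne
      have := supp_len_of_AdegH hq hv
      rw [FreeMonoid.length_mul] at hw
      omega
    rw [hz (hc (N - e) p)]
    split
    · exact hz p
    · rfl

lemma hc_finset_sum {ι : Type*} (s : Finset ι) (f : ι → FA g) (e : ℕ) :
    hc e (∑ i ∈ s, f i) = ∑ i ∈ s, hc e (f i) := by
  classical
  induction s using Finset.induction with
  | empty => simp [hc_zero]
  | insert _ _ hnotmem ih =>
      rw [Finset.sum_insert hnotmem, Finset.sum_insert hnotmem, hc_add, ih]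

/-- top homogeneous component of a product -/
lemma hc_top_mul {p q : FA g} {a b : ℕ} (hp : p ∈ Adeg g a) (hq : q ∈ Adeg g b) :
    hc (a + b) (p * q) = hc a p * hc b q := by
  conv_lhs => rw [sum_hc hp, Finset.sum_mul]
  rw [hc_finset_sum]
  rw [Finset.sum_eq_single a]
  · rw [hc_mul_left (hc_mem_AdegH a p) q (by omega), show a + b - a = b from by omega]
  · intro e he hea
    rw [Finset.mem_range] at he
    rw [hc_mul_left (hc_mem_AdegH e p) q (by omega)]
    rw [hc_eq_zero_of_lt hq (by omega), mul_zero]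
  · intro h
    exact absurd (Finset.mem_range.mpr (by omega)) h

lemma deg_lead_eq_of {p : FA g} {N : ℕ} (h1 : p ∈ Adeg g N) (h2 : hc N p ≠ 0) :
    deg p = N ∧ lead p = hc N p := by
  have hle : deg p ≤ N := deg_le_iff.mpr h1
  have : ∃ w, toMA (hc N p) w ≠ 0 := by
    by_contra hall
    push_neg at hall
    exact h2 ((toMA (g := g)).injective (by ext w; rw [hall w]; simp))
  obtain ⟨w, hw⟩ := this
  rw [toMA_hc] at hw
  have hwN : w.length = N := by by_contra hne; rw [if_neg hne] at hw; exact hw rfl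
  rw [if_pos hwN] at hw
  have hmem : w ∈ (toMA (g := g) p).coeff.support := Finsupp.mem_support_iff.mpr hw
  have hge : N ≤ deg p := by
    have h5 := Finset.le_sup (f := FreeMonoid.length) hmem
    have h6 : deg p = (toMA (g := g) p).coeff.support.sup FreeMonoid.length := rfl
    omega
  have hdeg : deg p = N := le_antisymm hle hge
  exact ⟨hdeg, by rw [lead_eq_hc, hdeg]⟩

lemma deg_mul {p q : FA g} (hp : p ≠ 0) (hq : q ≠ 0) :
    deg (p * q) = deg p + deg q ∧ lead (p * q) = lead p * lead q := by
  have h1 : p * q ∈ Adeg g (deg p + deg q) := mul_mem_Adeg (mem_Adeg_deg p) (mem_Adeg_deg q)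
  have h2 : hc (deg p + deg q) (p * q) = lead p * lead q :=
    hc_top_mul (mem_Adeg_deg p) (mem_Adeg_deg q)
  have h3 : lead p * lead q ≠ 0 :=
    homog_mul_ne_zero (lead_mem_AdegH p) (lead_ne_zero hp) (lead_ne_zero hq)
  obtain ⟨hd, hl⟩ := deg_lead_eq_of h1 (by rw [h2]; exact h3)
  exact ⟨hd, by rw [hl, h2]⟩

end Stmt8Aux

namespace Stmt8Aux

variable {g : ℕ}

/-- extensionality: linear maps on the free algebra agreeing on monomials agree -/
lemma fa_ext {M : Type*} [AddCommMonoid M] [Module ℝ M] {Φ Ψ : FA g →ₗ[ℝ] M}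
    (h : ∀ w : W g, Φ (mwc w 1) = Ψ (mwc w 1)) : Φ = Ψ := by
  have key : Φ.comp (toMA (g := g)).symm.toLinearMap
      = Ψ.comp (toMA (g := g)).symm.toLinearMap := by
    refine MonoidAlgebra.lhom_ext' (fun w => LinearMap.ext (fun c => ?_))
    have h1 : (MonoidAlgebra.single w c : MonoidAlgebra ℝ (W g)) = c • MonoidAlgebra.single w 1 := by
      rw [MonoidAlgebra.smul_single', mul_one]
    simp only [LinearMap.comp_apply, AlgEquiv.toLinearMap_apply, MonoidAlgebra.lsingle_apply]
    show Φ (mwc w c) = Ψ (mwc w c)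
    rw [← smul_mwc, _root_.map_smul Φ, _root_.map_smul Ψ]
    exact congrArg (c • ·) (h w)
  ext p
  have := congrArg (fun F : MonoidAlgebra ℝ (W g) →ₗ[ℝ] M => F (toMA p)) key
  simpa [mwc] using this

lemma fstar_mul (p q : FA g) : fstar (p * q) = fstar q * fstar p := by
  simp only [fstar, fstarL, LinearMap.comp_apply, AlgHom.toLinearMap_apply,
    LinearEquiv.coe_coe, _root_.map_mul]
  rfl

lemma fstar_one : fstar (1 : FA g) = 1 := by
  simp only [fstar, fstarL, LinearMap.comp_apply, AlgHom.toLinearMap_apply,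
    LinearEquiv.coe_coe, _root_.map_one]
  try rfl

lemma fstar_iota (i : Fin g ⊕ Fin g) :
    fstar (FreeAlgebra.ι ℝ i) = FreeAlgebra.ι ℝ (Sum.swap i) := by
  simp only [fstar, fstarL, LinearMap.comp_apply, AlgHom.toLinearMap_apply,
    LinearEquiv.coe_coe, FreeAlgebra.lift_ι_apply]
  try rfl

lemma mwc_of (i : Fin g ⊕ Fin g) : mwc (FreeMonoid.of i) 1 = FreeAlgebra.ι ℝ i := by
  apply (toMA (g := g)).injective
  rw [toMA_mwc]
  simp [toMA, FreeAlgebra.equivMonoidAlgebraFreeMonoid]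
  try rfl

/-- reverse and swap letters -/
def revswap (w : W g) : W g := FreeMonoid.ofList ((w.toList.map Sum.swap).reverse)

lemma revswap_len (w : W g) : (revswap w).length = w.length := by
  show ((w.toList.map Sum.swap).reverse).length = w.toList.length
  rw [List.length_reverse, List.length_map]

lemma revswap_mul (u v : W g) : revswap (u * v) = revswap v * revswap u := by
  apply FreeMonoid.toList.injective
  simp [revswap]

lemma revswap_of (i : Fin g ⊕ Fin g) : revswap (FreeMonoid.of i) = FreeMonoid.of (Sum.swap i) := by
  apply FreeMonoid.toList.injective
  simp [revswap]

lemma revswap_one : revswap (1 : W g) = 1 := rfl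

lemma revswap_revswap (w : W g) : revswap (revswap w) = w := by
  apply FreeMonoid.toList.injective
  simp [revswap, List.map_reverse, Function.comp]

lemma fstar_mwc (w : W g) (c : ℝ) : fstar (mwc w c) = mwc (revswap w) c := by
  have key : ∀ l : List (Fin g ⊕ Fin g), fstar (mwc (FreeMonoid.ofList l) 1)
      = mwc (revswap (FreeMonoid.ofList l)) 1 := by
    intro l
    induction l with
    | nil =>
        show fstar (mwc (1 : W g) 1) = mwc (revswap 1) 1
        rw [mwc_one, fstar_one, revswap_one, mwc_one]
    | cons i l ih =>
        have h1 : (FreeMonoid.ofList (i :: l) : W g) = FreeMonoid.of i * FreeMonoid.ofList l := rfl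
        have hmm1 : mwc (FreeMonoid.of i) 1 * mwc (FreeMonoid.ofList l) 1
            = mwc (FreeMonoid.of i * FreeMonoid.ofList l) (1 : ℝ) := by
          rw [mwc_mul_mwc, one_mul]
        have hmm2 : mwc (revswap (FreeMonoid.ofList l)) 1 * mwc (FreeMonoid.of (Sum.swap i)) 1
            = mwc (revswap (FreeMonoid.ofList l) * FreeMonoid.of (Sum.swap i)) (1 : ℝ) := by
          rw [mwc_mul_mwc, one_mul]
        rw [h1, ← hmm1, fstar_mul, revswap_mul, ih, revswap_of, ← hmm2]
        congr 1
        rw [mwc_of, fstar_iota, ← mwc_of]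
  have : fstar (mwc w 1) = mwc (revswap w) 1 := key w.toList
  calc fstar (mwc w c) = fstar (c • mwc w 1) := by rw [smul_mwc]
    _ = c • fstar (mwc w 1) := by exact _root_.map_smul (fstarL g) c _
    _ = c • mwc (revswap w) 1 := by rw [this]
    _ = mwc (revswap w) c := smul_mwc c _

lemma toMA_fstar (p : FA g) (w : W g) : toMA (fstar p) w = toMA p (revswap w) := by
  have key : (toMA (g := g)).toLinearMap.comp (fstarL g)
      = (MonoidAlgebra.mapDomainLinearMap ℝ ℝ (revswap (g := g))).comp (toMA (g := g)).toLinearMap := by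
    apply fa_ext
    intro v
    simp only [LinearMap.comp_apply, AlgEquiv.toLinearMap_apply]
    show toMA (fstar (mwc v 1)) = MonoidAlgebra.mapDomain revswap (toMA (mwc v 1))
    rw [fstar_mwc, toMA_mwc, toMA_mwc, MonoidAlgebra.mapDomain_single]
  have h1 := LinearMap.congr_fun key p
  simp only [LinearMap.coe_comp, Function.comp_apply, LinearMap.comp_apply,
    AlgEquiv.toLinearMap_apply] at h1
  have hinj : Function.Injective (revswap (g := g)) :=
    Function.LeftInverse.injective revswap_revswap
  show ((toMA (g := g)) ((fstarL g) p)).coeff w = _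
  rw [h1]
  conv_lhs => rw [show w = revswap (revswap w) from (revswap_revswap w).symm]
  exact Finsupp.mapDomain_apply hinj (toMA p).coeff (revswap w)

lemma fstar_fstar (p : FA g) : fstar (fstar p) = p := by
  apply (toMA (g := g)).injective
  ext w
  rw [toMA_fstar, toMA_fstar, revswap_revswap]

lemma fstar_add (p q : FA g) : fstar (p + q) = fstar p + fstar q :=
  _root_.map_add (fstarL g) p q

lemma fstar_zero : fstar (0 : FA g) = 0 := _root_.map_zero (fstarL g)

lemma fstar_inj : Function.Injective (fstar (g := g)) :=
  Function.LeftInverse.injective fstar_fstar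

lemma fstar_mem_AdegH {p : FA g} {e : ℕ} (h : p ∈ AdegH g e) : fstar p ∈ AdegH g e := by
  rw [mem_AdegH_iff] at *
  intro w hw
  rw [toMA_fstar]
  exact h _ (by rw [revswap_len]; exact hw)

lemma fstar_mem_Adeg {p : FA g} {e : ℕ} (h : p ∈ Adeg g e) : fstar p ∈ Adeg g e := by
  rw [mem_Adeg_iff] at *
  intro w hw
  rw [toMA_fstar]
  exact h _ (by rw [revswap_len]; exact hw)

lemma hc_fstar (e : ℕ) (p : FA g) : hc e (fstar p) = fstar (hc e p) := by
  apply (toMA (g := g)).injective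
  ext w
  rw [toMA_hc, toMA_fstar, toMA_fstar (hc e p) w, toMA_hc, revswap_len]

lemma deg_fstar (p : FA g) : deg (fstar p) = deg p := by
  by_cases hp : p = 0
  · rw [hp, fstar_zero]
  · have h1 : deg (fstar p) ≤ deg p := deg_le_iff.mpr (fstar_mem_Adeg (mem_Adeg_deg p))
    have h2 : deg p ≤ deg (fstar p) := by
      conv_lhs => rw [← fstar_fstar p]
      exact deg_le_iff.mpr (fstar_mem_Adeg (mem_Adeg_deg (fstar p)))
    omega

lemma lead_fstar (p : FA g) : lead (fstar p) = fstar (lead p) := by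
  rw [lead_eq_hc, lead_eq_hc, deg_fstar, hc_fstar]

lemma fstar_ne_zero {p : FA g} (h : p ≠ 0) : fstar p ≠ 0 := by
  intro h0
  exact h (by rw [← fstar_fstar p, h0, fstar_zero])

/-- fstarL on submodules -/
lemma mem_map_fstar {X : Submodule ℝ (FA g)} {x : FA g} :
    x ∈ X.map (fstarL g) ↔ ∃ y ∈ X, fstar y = x := by
  simp only [Submodule.mem_map]
  rfl

lemma fstar_mem_map {X : Submodule ℝ (FA g)} {x : FA g} (h : x ∈ X) :
    fstar x ∈ X.map (fstarL g) := mem_map_fstar.mpr ⟨x, h, rfl⟩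

lemma map_fstar_map_fstar (X : Submodule ℝ (FA g)) :
    (X.map (fstarL g)).map (fstarL g) = X := by
  apply le_antisymm
  · rintro _ ⟨y, hy, rfl⟩
    obtain ⟨z, hz, rfl⟩ := hy
    show fstar (fstar z) ∈ X
    rw [fstar_fstar]
    exact hz
  · intro x hx
    exact ⟨fstar x, ⟨x, hx, rfl⟩, fstar_fstar x⟩

lemma map_fstar_mono {X Y : Submodule ℝ (FA g)} (h : X ≤ Y) :
    X.map (fstarL g) ≤ Y.map (fstarL g) := Submodule.map_mono h

lemma map_fstar_mul_le (X Y : Submodule ℝ (FA g)) :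
    (X * Y).map (fstarL g) ≤ Y.map (fstarL g) * X.map (fstarL g) := by
  rintro _ ⟨z, hz, rfl⟩
  refine Submodule.mul_induction_on (C := fun r => fstar r ∈ Y.map (fstarL g) * X.map (fstarL g))
    hz ?_ ?_
  · intro x hx y hy
    show fstar (x * y) ∈ _
    rw [fstar_mul]
    exact Submodule.mul_mem_mul (fstar_mem_map hy) (fstar_mem_map hx)
  · intro x y hx hy
    show fstar (x + y) ∈ _
    rw [fstar_add]
    exact Submodule.add_mem _ hx hy

lemma map_fstar_mul (X Y : Submodule ℝ (FA g)) :
    (X * Y).map (fstarL g) = Y.map (fstarL g) * X.map (fstarL g) := by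
  apply le_antisymm (map_fstar_mul_le X Y)
  have h1 := map_fstar_mul_le (Y.map (fstarL g)) (X.map (fstarL g))
  rw [map_fstar_map_fstar, map_fstar_map_fstar] at h1
  have h2 := map_fstar_mono h1
  rw [map_fstar_map_fstar] at h2
  exact h2

lemma map_fstar_AdegH (e : ℕ) : (AdegH g e).map (fstarL g) = AdegH g e := by
  apply le_antisymm
  · rintro _ ⟨y, hy, rfl⟩
    exact fstar_mem_AdegH hy
  · intro x hx
    exact ⟨fstar x, fstar_mem_AdegH hx, fstar_fstar x⟩

lemma map_fstar_disjoint {X Y : Submodule ℝ (FA g)} (h : Disjoint X Y) :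
    Disjoint (X.map (fstarL g)) (Y.map (fstarL g)) := by
  rw [Submodule.disjoint_def] at h ⊢
  rintro x hx hy
  obtain ⟨a, ha, rfl⟩ := hx
  obtain ⟨b, hb, hab⟩ := hy
  have hba : b = a := fstar_inj hab
  subst hba
  rw [h b ha hb]
  exact _root_.map_zero _

lemma map_fstar_sup (X Y : Submodule ℝ (FA g)) :
    (X ⊔ Y).map (fstarL g) = X.map (fstarL g) ⊔ Y.map (fstarL g) := Submodule.map_sup _ _ _

end Stmt8Aux

namespace Stmt8Aux

open scoped Classical

variable {g : ℕ}

lemma mwc_mem_AdegH (w : W g) (c : ℝ) : mwc w c ∈ AdegH g w.length := by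
  rw [mem_AdegH_iff]
  intro v hv
  rw [toMA_mwc]
  rw [MonoidAlgebra.coeff_single, Finsupp.single_apply, if_neg]
  intro h
  exact hv (by rw [← h])

lemma mwc_mem_Adeg {w : W g} {D : ℕ} (h : w.length ≤ D) (c : ℝ) : mwc w c ∈ Adeg g D := by
  exact Adeg_mono h (AdegH_le_Adeg (mwc_mem_AdegH w c))

lemma AdegH_eq_span (e : ℕ) :
    AdegH g e = Submodule.span ℝ {p : FA g | ∃ w : W g, w.length = e ∧ p = mwc w 1} := by
  apply le_antisymm
  · intro p hp
    rw [eq_sum_mwc p]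
    apply Submodule.sum_mem
    intro w hw
    show mwc w ((toMA p) w) ∈ _
    rw [← smul_mwc]
    apply Submodule.smul_mem
    apply Submodule.subset_span
    exact ⟨w, supp_len_of_AdegH hp (Finsupp.mem_support_iff.mp hw), rfl⟩
  · rw [Submodule.span_le]
    rintro _ ⟨w, hw, rfl⟩
    simpa [hw] using mwc_mem_AdegH w 1

lemma AdegH_mul_AdegH (a b : ℕ) : AdegH g a * AdegH g b = AdegH g (a + b) := by
  apply le_antisymm
  · rw [Submodule.mul_le]
    intro x hx y hy
    exact mul_mem_AdegH hx hy
  · intro p hp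
    rw [eq_sum_mwc p]
    apply Submodule.sum_mem
    intro w hw
    have hlen : w.length = a + b := supp_len_of_AdegH hp (Finsupp.mem_support_iff.mp hw)
    have hsplit : mwc (tk a w) (toMA p w) * mwc (dr a w) 1 = mwc w (toMA p w) := by
      rw [mwc_mul_mwc, mul_one, tk_mul_dr]
    show mwc w ((toMA p) w) ∈ _
    rw [← hsplit]
    apply Submodule.mul_mem_mul
    · have := mwc_mem_AdegH (tk a w) (toMA p w)
      rwa [tk_len (by omega)] at this
    · have := mwc_mem_AdegH (dr a w) 1
      rwa [dr_len, hlen, show a + b - a = b from by omega] at this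

/-- left block operator -/
def Oleft (f : FA g →ₗ[ℝ] FA g) (d : ℕ) : FA g →ₗ[ℝ] FA g :=
  (toMA (g := g)).symm.toLinearMap ∘ₗ
    (Finsupp.lsum ℝ fun w : W g => LinearMap.toSpanSingleton ℝ _
      (toMA (g := g) (f (mwc (tk d w) 1) * mwc (dr d w) 1))) ∘ₗ
    (MonoidAlgebra.coeffLinearEquiv ℝ).toLinearMap ∘ₗ (toMA (g := g)).toLinearMap

lemma Oleft_single (f : FA g →ₗ[ℝ] FA g) (d : ℕ) (w : W g) (c : ℝ) :
    Oleft f d (mwc w c) = c • (f (mwc (tk d w) 1) * mwc (dr d w) 1) := by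
  show (toMA (g := g)).symm
      ((Finsupp.lsum ℝ fun w : W g => LinearMap.toSpanSingleton ℝ _
        (toMA (g := g) (f (mwc (tk d w) 1) * mwc (dr d w) 1)))
        (toMA (g := g) (mwc w c)).coeff) = _
  rw [toMA_mwc, MonoidAlgebra.coeff_single]
  rw [show (Finsupp.single w c : W g →₀ ℝ) = c • Finsupp.single w 1 from by
    rw [Finsupp.smul_single, smul_eq_mul, mul_one]]
  rw [_root_.map_smul, _root_.map_smul, Finsupp.lsum_single, LinearMap.toSpanSingleton_apply_one]
  exact congrArg (c • ·) ((toMA (g := g)).symm_apply_apply _)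

/-- right block operator -/
def Oright (f : FA g →ₗ[ℝ] FA g) (d : ℕ) : FA g →ₗ[ℝ] FA g :=
  (toMA (g := g)).symm.toLinearMap ∘ₗ
    (Finsupp.lsum ℝ fun w : W g => LinearMap.toSpanSingleton ℝ _
      (toMA (g := g) (mwc (tk (w.length - d) w) 1 * f (mwc (dr (w.length - d) w) 1)))) ∘ₗ
    (MonoidAlgebra.coeffLinearEquiv ℝ).toLinearMap ∘ₗ (toMA (g := g)).toLinearMap

lemma Oright_single (f : FA g →ₗ[ℝ] FA g) (d : ℕ) (w : W g) (c : ℝ) :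
    Oright f d (mwc w c)
      = c • (mwc (tk (w.length - d) w) 1 * f (mwc (dr (w.length - d) w) 1)) := by
  show (toMA (g := g)).symm
      ((Finsupp.lsum ℝ fun w : W g => LinearMap.toSpanSingleton ℝ _
        (toMA (g := g) (mwc (tk (w.length - d) w) 1 * f (mwc (dr (w.length - d) w) 1))))
        (toMA (g := g) (mwc w c)).coeff) = _
  rw [toMA_mwc, MonoidAlgebra.coeff_single]
  rw [show (Finsupp.single w c : W g →₀ ℝ) = c • Finsupp.single w 1 from by
    rw [Finsupp.smul_single, smul_eq_mul, mul_one]]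
  rw [_root_.map_smul, _root_.map_smul, Finsupp.lsum_single, LinearMap.toSpanSingleton_apply_one]
  exact congrArg (c • ·) ((toMA (g := g)).symm_apply_apply _)

lemma tk_prefix {u v : W g} (d : ℕ) (hu : u.length = d) : tk d (u * v) = u := by
  apply FreeMonoid.toList.injective
  show (u.toList ++ v.toList).take d = u.toList
  rw [← hu]
  exact List.take_left

lemma dr_prefix {u v : W g} (d : ℕ) (hu : u.length = d) : dr d (u * v) = v := by
  apply FreeMonoid.toList.injective
  show (u.toList ++ v.toList).drop d = v.toList
  rw [← hu]
  exact List.drop_left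

lemma Oleft_mul (f : FA g →ₗ[ℝ] FA g) {d : ℕ} {a : FA g} (ha : a ∈ AdegH g d) (b : FA g) :
    Oleft f d (a * b) = f a * b := by
  -- first for monomial a
  have key : ∀ u : W g, u.length = d → ∀ b : FA g,
      Oleft f d (mwc u 1 * b) = f (mwc u 1) * b := by
    intro u hu
    have hmaps : (Oleft f d) ∘ₗ (LinearMap.mulLeft ℝ (mwc u 1))
        = LinearMap.mulLeft ℝ (f (mwc u 1)) := by
      apply fa_ext
      intro v
      simp only [LinearMap.comp_apply, LinearMap.mulLeft_apply]
      rw [show mwc u 1 * mwc v 1 = mwc (u * v) 1 from by rw [mwc_mul_mwc, one_mul]]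
      rw [Oleft_single, tk_prefix d hu, dr_prefix d hu, one_smul]
    intro b
    exact LinearMap.congr_fun hmaps b
  -- now extend by linearity in a
  rw [AdegH_eq_span] at ha
  induction ha using Submodule.span_induction with
  | mem x hx =>
      obtain ⟨w, hw, rfl⟩ := hx
      exact key w hw b
  | zero => rw [zero_mul, _root_.map_zero, _root_.map_zero, zero_mul]
  | add x y hx hy ihx ihy => rw [add_mul, _root_.map_add, ihx, ihy, _root_.map_add, add_mul]
  | smul c x hx ihx => rw [smul_mul_assoc, _root_.map_smul, ihx, _root_.map_smul, smul_mul_assoc]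

lemma Oright_mul (f : FA g →ₗ[ℝ] FA g) {d : ℕ} {b : FA g} (hb : b ∈ AdegH g d) (a : FA g) :
    Oright f d (a * b) = a * f b := by
  have key : ∀ v : W g, v.length = d → ∀ a : FA g,
      Oright f d (a * mwc v 1) = a * f (mwc v 1) := by
    intro v hv
    have hmaps : (Oright f d) ∘ₗ (LinearMap.mulRight ℝ (mwc v 1))
        = LinearMap.mulRight ℝ (f (mwc v 1)) := by
      apply fa_ext
      intro u
      simp only [LinearMap.comp_apply, LinearMap.mulRight_apply]
      rw [show mwc u 1 * mwc v 1 = mwc (u * v) 1 from by rw [mwc_mul_mwc, one_mul]]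
      have hlen : (u * v).length - d = u.length := by
        rw [FreeMonoid.length_mul, hv]; omega
      rw [Oright_single, hlen, tk_prefix u.length rfl, dr_prefix u.length rfl, one_smul]
    intro a
    exact LinearMap.congr_fun hmaps a
  rw [AdegH_eq_span] at hb
  induction hb using Submodule.span_induction with
  | mem x hx =>
      obtain ⟨w, hw, rfl⟩ := hx
      exact key w hw a
  | zero => rw [mul_zero, _root_.map_zero, _root_.map_zero, mul_zero]
  | add x y hx hy ihx ihy => rw [mul_add, _root_.map_add, ihx, ihy, _root_.map_add, mul_add]
  | smul c x hx ihx =>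
      rw [mul_smul_comm, _root_.map_smul, ihx, _root_.map_smul, mul_smul_comm]

section OperatorSubmodule

variable {f : FA g →ₗ[ℝ] FA g} {d : ℕ} {X Y : Submodule ℝ (FA g)}

lemma Oleft_mem (hX : X ≤ AdegH g d) {θ : FA g} (hθ : θ ∈ X * Y) :
    Oleft f d θ ∈ X.map f * Y := by
  refine Submodule.mul_induction_on (C := fun r => Oleft f d r ∈ X.map f * Y) hθ ?_ ?_
  · intro x hx y hy
    rw [Oleft_mul f (hX hx)]
    exact Submodule.mul_mem_mul ⟨x, hx, rfl⟩ hy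
  · intro x y hx hy
    rw [_root_.map_add]
    exact Submodule.add_mem _ hx hy

lemma Oleft_fixes (hX : X ≤ AdegH g d) (hf : ∀ x ∈ X, f x = x) {θ : FA g} (hθ : θ ∈ X * Y) :
    Oleft f d θ = θ := by
  refine Submodule.mul_induction_on (C := fun r => Oleft f d r = r) hθ ?_ ?_
  · intro x hx y hy
    rw [Oleft_mul f (hX hx), hf x hx]
  · intro x y hx hy
    rw [_root_.map_add, hx, hy]

lemma Oleft_kills (hX : X ≤ AdegH g d) (hf : ∀ x ∈ X, f x = 0) {θ : FA g} (hθ : θ ∈ X * Y) :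
    Oleft f d θ = 0 := by
  refine Submodule.mul_induction_on (C := fun r => Oleft f d r = 0) hθ ?_ ?_
  · intro x hx y hy
    rw [Oleft_mul f (hX hx), hf x hx, zero_mul]
  · intro x y hx hy
    rw [_root_.map_add, hx, hy, add_zero]

lemma Oright_mem (hY : Y ≤ AdegH g d) {θ : FA g} (hθ : θ ∈ X * Y) :
    Oright f d θ ∈ X * Y.map f := by
  refine Submodule.mul_induction_on (C := fun r => Oright f d r ∈ X * Y.map f) hθ ?_ ?_
  · intro x hx y hy
    rw [Oright_mul f (hY hy)]
    exact Submodule.mul_mem_mul hx ⟨y, hy, rfl⟩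
  · intro x y hx hy
    rw [_root_.map_add]
    exact Submodule.add_mem _ hx hy

lemma Oright_fixes (hY : Y ≤ AdegH g d) (hf : ∀ y ∈ Y, f y = y) {θ : FA g} (hθ : θ ∈ X * Y) :
    Oright f d θ = θ := by
  refine Submodule.mul_induction_on (C := fun r => Oright f d r = r) hθ ?_ ?_
  · intro x hx y hy
    rw [Oright_mul f (hY hy), hf y hy]
  · intro x y hx hy
    rw [_root_.map_add, hx, hy]

lemma Oright_kills (hY : Y ≤ AdegH g d) (hf : ∀ y ∈ Y, f y = 0) {θ : FA g} (hθ : θ ∈ X * Y) :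
    Oright f d θ = 0 := by
  refine Submodule.mul_induction_on (C := fun r => Oright f d r = 0) hθ ?_ ?_
  · intro x hx y hy
    rw [Oright_mul f (hY hy), hf y hy, mul_zero]
  · intro x y hx hy
    rw [_root_.map_add, hx, hy, add_zero]

end OperatorSubmodule

/-- a projection onto `L` vanishing on `G'`, for disjoint subspaces -/
lemma exists_proj {L G' : Submodule ℝ (FA g)} (h : Disjoint L G') :
    ∃ f : FA g →ₗ[ℝ] FA g, (∀ x ∈ L, f x = x) ∧ (∀ x ∈ G', f x = 0) ∧ ∀ x, f x ∈ L := by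
  obtain ⟨C, hC⟩ := Submodule.exists_isCompl (L ⊔ G')
  have hcompl : IsCompl L (G' ⊔ C) := by
    constructor
    · rw [Submodule.disjoint_def]
      intro x hxL hxQ
      rw [Submodule.mem_sup] at hxQ
      obtain ⟨y, hy, z, hz, hyz⟩ := hxQ
      have hzmem : z ∈ (L ⊔ G') ⊓ C := by
        constructor
        · have : z = x - y := by rw [← hyz]; abel
          rw [this]
          exact Submodule.sub_mem _ (Submodule.mem_sup_left hxL) (Submodule.mem_sup_right hy)
        · exact hz
      rw [hC.inf_eq_bot] at hzmem
      rw [Submodule.mem_bot] at hzmem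
      subst hzmem
      rw [add_zero] at hyz
      subst hyz
      exact Submodule.disjoint_def.mp h y hxL hy
    · rw [codisjoint_iff, ← sup_assoc, hC.sup_eq_top]
  refine ⟨L.subtype ∘ₗ Submodule.linearProjOfIsCompl L (G' ⊔ C) hcompl, ?_, ?_, ?_⟩
  · intro x hx
    exact congrArg Subtype.val (Submodule.linearProjOfIsCompl_apply_left hcompl ⟨x, hx⟩)
  · intro x hx
    exact congrArg Subtype.val
      (Submodule.linearProjOfIsCompl_apply_right hcompl ⟨x, Submodule.mem_sup_left hx⟩)
  · intro x
    exact (Submodule.linearProjOfIsCompl L _ hcompl x).2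

end Stmt8Aux

namespace Stmt8Aux

variable {g : ℕ}

lemma ellSet_le_AdegH (V : Submodule ℝ (FA g)) (d : ℕ) : ellSet V d ≤ AdegH g d := by
  rw [ellSet, Submodule.span_le]
  rintro _ ⟨p, hp, hp0, hdeg, rfl⟩
  rw [← hdeg]
  exact lead_mem_AdegH p

lemma lead_mem_ellSet {V : Submodule ℝ (FA g)} {d : ℕ} {p : FA g} (hp : p ∈ V) (hp0 : p ≠ 0)
    (hdeg : deg p = d) : lead p ∈ ellSet V d :=
  Submodule.subset_span ⟨p, hp, hp0, hdeg, rfl⟩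

lemma hc_sub (e : ℕ) (p q : FA g) : hc e (p - q) = hc e p - hc e q := by
  have : p - q = p + (-1 : ℝ) • q := by rw [neg_one_smul]; abel
  rw [this, hc_add, hc_smul, neg_one_smul]
  abel

lemma ellSet_mem {V : Submodule ℝ (FA g)} {d : ℕ} {q : FA g} (hq : q ∈ ellSet V d) :
    q = 0 ∨ ∃ p, p ∈ V ∧ p ≠ 0 ∧ deg p = d ∧ lead p = q := by
  induction hq using Submodule.span_induction with
  | mem x hx =>
      obtain ⟨p, hp, hp0, hdeg, rfl⟩ := hx
      exact Or.inr ⟨p, hp, hp0, hdeg, rfl⟩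
  | zero => exact Or.inl rfl
  | add x y hx hy ihx ihy =>
      rcases ihx with rfl | ⟨p₁, hp₁, h01, hd₁, hl₁⟩
      · rw [zero_add]; exact ihy
      rcases ihy with rfl | ⟨p₂, hp₂, h02, hd₂, hl₂⟩
      · rw [add_zero]; exact Or.inr ⟨p₁, hp₁, h01, hd₁, hl₁⟩
      by_cases hxy : x + y = 0
      · exact Or.inl hxy
      · have hmem : p₁ + p₂ ∈ Adeg g d := by
          apply Submodule.add_mem
          · rw [← hd₁]; exact mem_Adeg_deg p₁
          · rw [← hd₂]; exact mem_Adeg_deg p₂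
        have e₁ : hc d p₁ = x := by rw [← hd₁, hc_deg_eq_lead, hl₁]
        have e₂ : hc d p₂ = y := by rw [← hd₂, hc_deg_eq_lead, hl₂]
        have hhc : hc d (p₁ + p₂) = x + y := by rw [hc_add, e₁, e₂]
        have hne : p₁ + p₂ ≠ 0 := by
          intro h0
          rw [h0, hc_zero] at hhc
          exact hxy hhc.symm
        obtain ⟨hdeg', hlead'⟩ := deg_lead_eq_of hmem (by rw [hhc]; exact hxy)
        exact Or.inr ⟨p₁ + p₂, V.add_mem hp₁ hp₂, hne, hdeg', by rw [hlead', hhc]⟩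
  | smul c x hx ihx =>
      rcases ihx with rfl | ⟨p, hp, hp0, hdeg, hl⟩
      · rw [smul_zero]; exact Or.inl rfl
      by_cases hc0 : c = 0
      · rw [hc0, zero_smul]; exact Or.inl rfl
      · have hmem : c • p ∈ Adeg g d := by
          apply Submodule.smul_mem
          rw [← hdeg]; exact mem_Adeg_deg p
        have e₁ : hc d p = x := by rw [← hdeg, hc_deg_eq_lead, hl]
        have hhc : hc d (c • p) = c • x := by rw [hc_smul, e₁]
        have hx0 : x ≠ 0 := hl ▸ lead_ne_zero hp0
        have hne : c • p ≠ 0 := smul_ne_zero hc0 hp0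
        obtain ⟨hdeg', hlead'⟩ := deg_lead_eq_of hmem
          (by rw [hhc]; exact smul_ne_zero hc0 hx0)
        exact Or.inr ⟨c • p, V.smul_mem c hp, hne, hdeg', by rw [hlead', hhc]⟩

lemma hc_triple {x y z : FA g} {a b c : ℕ} (hx : x ∈ Adeg g a) (hy : y ∈ Adeg g b)
    (hz : z ∈ Adeg g c) : hc (a + b + c) (x * y * z) = hc a x * hc b y * hc c z := by
  rw [hc_top_mul (mul_mem_Adeg hx hy) hz, hc_top_mul hx hy]

/-- extraction of a single witness from a triple product of subspaces -/
lemma triple_extract {X Z : Submodule ℝ (FA g)} {m N : ℕ} (Q : FA g → Prop)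
    (hQ0 : Q 0) (hQadd : ∀ z₁ z₂, Q z₁ → Q z₂ → Q (z₁ + z₂))
    (hgen : ∀ x ∈ X, ∀ h ∈ AdegH g m, ∀ ζ ∈ Z,
      ∃ z, Q z ∧ z ∈ Adeg g N ∧ hc N z = x * h * ζ) :
    ∀ θ ∈ X * AdegH g m * Z, ∃ z, Q z ∧ z ∈ Adeg g N ∧ hc N z = θ := by
  intro θ hθ
  refine Submodule.mul_induction_on
    (C := fun r => ∃ z, Q z ∧ z ∈ Adeg g N ∧ hc N z = r) hθ ?_ ?_
  · intro ξ hξ ζ hζ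
    refine Submodule.mul_induction_on
      (C := fun r => ∃ z, Q z ∧ z ∈ Adeg g N ∧ hc N z = r * ζ) hξ ?_ ?_
    · intro x hx h hh
      exact hgen x hx h hh ζ hζ
    · rintro r₁ r₂ ⟨z₁, hQ₁, hA₁, hc₁⟩ ⟨z₂, hQ₂, hA₂, hc₂⟩
      exact ⟨z₁ + z₂, hQadd _ _ hQ₁ hQ₂, Submodule.add_mem _ hA₁ hA₂,
        by rw [hc_add, hc₁, hc₂, add_mul]⟩
  · rintro r₁ r₂ ⟨z₁, hQ₁, hA₁, hc₁⟩ ⟨z₂, hQ₂, hA₂, hc₂⟩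
    exact ⟨z₁ + z₂, hQadd _ _ hQ₁ hQ₂, Submodule.add_mem _ hA₁ hA₂,
      by rw [hc_add, hc₁, hc₂]⟩

/-- drop the degree bound when the top component vanishes -/
lemma deg_drop {p : FA g} {N : ℕ} (hp : p ∈ Adeg g N) (h0 : hc N p = 0) :
    p ∈ Adeg g (N - 1) := by
  rw [mem_Adeg_iff] at hp ⊢
  intro w hw
  by_cases hN : w.length = N
  · have := toMA_hc N p w
    rw [h0] at this
    simp only [_root_.map_zero, MonoidAlgebra.coeff_zero, Finsupp.coe_zero, Pi.zero_apply] at this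
    rw [if_pos hN] at this
    exact this.symm
  · exact hp w (by omega)

end Stmt8Aux

namespace Stmt8Aux

open scoped Classical

variable {g : ℕ}

/-- evaluation of a representation -/
def valL : (W g →₀ FA g) →ₗ[ℝ] FA g :=
  Finsupp.lsum ℝ (fun w => LinearMap.mulLeft ℝ (mwc w 1))

lemma valL_single (w : W g) (q : FA g) : valL (Finsupp.single w q) = mwc w 1 * q := by
  simp [valL]

lemma valL_apply (ψ : W g →₀ FA g) : valL ψ = ψ.sum (fun w q => mwc w 1 * q) := by
  simp [valL, Finsupp.lsum_apply, LinearMap.mulLeft_apply]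
  rfl

lemma mwc_coeff (w u : W g) (c : ℝ) : toMA (mwc w c) u = if w = u then c else 0 := by
  rw [toMA_mwc, MonoidAlgebra.coeff_single, Finsupp.single_apply]

/-- set of elements representable with coefficients in `Vd` -/
def Rep (Vd : Submodule ℝ (FA g)) : Set (FA g) :=
  {p | ∃ ψ : W g →₀ FA g, (∀ w, ψ w ∈ Vd) ∧ valL ψ = p}

lemma rep_of_mem (Vd : Submodule ℝ (FA g)) {q : FA g} (hq : q ∈ Vd) : q ∈ Rep Vd := by
  refine ⟨Finsupp.single 1 q, ?_, ?_⟩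
  · intro w
    rw [Finsupp.single_apply]
    split
    · exact hq
    · exact Vd.zero_mem
  · rw [valL_single, mwc_one, one_mul]

lemma rep_zero (Vd : Submodule ℝ (FA g)) : (0 : FA g) ∈ Rep Vd :=
  ⟨0, fun w => by simp, _root_.map_zero _⟩

lemma rep_add (Vd : Submodule ℝ (FA g)) {p q : FA g} (hp : p ∈ Rep Vd) (hq : q ∈ Rep Vd) :
    p + q ∈ Rep Vd := by
  obtain ⟨ψ₁, h₁, rfl⟩ := hp
  obtain ⟨ψ₂, h₂, rfl⟩ := hq
  exact ⟨ψ₁ + ψ₂, fun w => by rw [Finsupp.add_apply]; exact Vd.add_mem (h₁ w) (h₂ w),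
    _root_.map_add _ _ _⟩

lemma rep_smul (Vd : Submodule ℝ (FA g)) {p : FA g} (c : ℝ) (hp : p ∈ Rep Vd) :
    c • p ∈ Rep Vd := by
  obtain ⟨ψ, h, rfl⟩ := hp
  exact ⟨c • ψ, fun w => by rw [Finsupp.smul_apply]; exact Vd.smul_mem c (h w),
    _root_.map_smul _ _ _⟩

lemma rep_mul_mwc (Vd : Submodule ℝ (FA g)) {p : FA g} (u : W g) (hp : p ∈ Rep Vd) :
    mwc u 1 * p ∈ Rep Vd := by
  obtain ⟨ψ, h, rfl⟩ := hp
  have hinj : Function.Injective (fun w : W g => u * w) := fun a b hab => by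
    exact mul_left_cancel hab
  refine ⟨Finsupp.mapDomain (fun w => u * w) ψ, ?_, ?_⟩
  · intro w
    by_cases hw : w ∈ Set.range (fun w : W g => u * w)
    · obtain ⟨w', rfl⟩ := hw
      rw [Finsupp.mapDomain_apply hinj]
      exact h w'
    · rw [Finsupp.mapDomain_notin_range _ _ hw]
      exact Vd.zero_mem
  · rw [valL_apply, Finsupp.sum_mapDomain_index (fun b => mul_zero _)
      (fun b m₁ m₂ => mul_add _ _ _)]
    rw [valL_apply, Finsupp.mul_sum]
    apply Finsupp.sum_congr
    intro w _
    rw [← mul_assoc, mwc_mul_mwc, one_mul]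

lemma rep_mul (Vd : Submodule ℝ (FA g)) {p : FA g} (a : FA g) (hp : p ∈ Rep Vd) :
    a * p ∈ Rep Vd := by
  rw [eq_sum_mwc a, Finsupp.sum, Finset.sum_mul]
  apply Finset.sum_induction _ (· ∈ Rep Vd) (fun x y hx => rep_add Vd hx) (rep_zero Vd)
  intro w hw
  have : mwc w (toMA a w) * p = (toMA a w) • (mwc w 1 * p) := by
    rw [← smul_mwc, smul_mul_assoc]
  rw [this]
  exact rep_smul Vd _ (rep_mul_mwc Vd w hp)

lemma rep_of_span (Vd : Submodule ℝ (FA g)) {p : FA g}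
    (hp : p ∈ Submodule.span (FA g) (Vd : Set (FA g))) : p ∈ Rep Vd := by
  induction hp using Submodule.span_induction with
  | mem x hx => exact rep_of_mem Vd hx
  | zero => exact rep_zero Vd
  | add x y hx hy ihx ihy => exact rep_add Vd ihx ihy
  | smul a x hx ihx =>
      rw [smul_eq_mul]
      exact rep_mul Vd a ihx

set_option maxHeartbeats 1000000 in
/-- the core degree-reduction lemma -/
lemma rep_reduce (I : Submodule (FA g) (FA g)) (d D : ℕ) (hD : d ≤ D) :
    ∀ n (ψ : W g →₀ FA g), (∀ w, ψ w ∈ I.restrictScalars ℝ ⊓ Adeg g d) →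
      (∑ w ∈ ψ.support, w.length) ≤ n → valL ψ ∈ Adeg g D →
      valL ψ ∈ (Adeg g (D - d)) * (I.restrictScalars ℝ ⊓ Adeg g d) := by
  intro n
  induction n using Nat.strong_induction_on with
  | _ n IH =>
  intro ψ hmem hn hdeg
  by_cases hgood : ∀ w ∈ ψ.support, w.length ≤ D - d
  · rw [valL_apply, Finsupp.sum]
    apply Submodule.sum_mem
    intro w hw
    exact Submodule.mul_mem_mul (mwc_mem_Adeg (hgood w hw) 1) (hmem w)
  push_neg at hgood
  by_cases hmerge : ∃ w₀ ∈ ψ.support, D - d < w₀.length ∧ deg (ψ w₀) < d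
  · -- merge step
    obtain ⟨w₀, hw₀s, hw₀l, hw₀d⟩ := hmerge
    have hψw₀ : ψ w₀ ≠ 0 := Finsupp.mem_support_iff.mp hw₀s
    set e := deg (ψ w₀) with he
    set k := min w₀.length (d - e) with hk
    have hw₀pos : 1 ≤ w₀.length := by omega
    have hk1 : 1 ≤ k := by omega
    have hkle : k ≤ w₀.length := min_le_left _ _
    set w' := tk (w₀.length - k) w₀ with hw'def
    set u := dr (w₀.length - k) w₀ with hudef
    have hwu : w' * u = w₀ := tk_mul_dr _ _
    have hul : u.length = k := by rw [hudef, dr_len]; omega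
    have hw'l : w'.length = w₀.length - k := tk_len (by omega)
    set q' := mwc u 1 * ψ w₀ with hq'def
    have hq'mem : q' ∈ I.restrictScalars ℝ ⊓ Adeg g d := by
      constructor
      · show q' ∈ I
        rw [hq'def, ← smul_eq_mul]
        exact I.smul_mem _ (hmem w₀).1
      · have h1 : q' ∈ Adeg g (k + e) := by
          apply mul_mem_Adeg _ (mem_Adeg_deg _)
          have := mwc_mem_Adeg (le_refl u.length) (1 : ℝ)
          rwa [hul] at this
        exact Adeg_mono (by omega) h1
    have hw'ne : w' ≠ w₀ := by
      intro hcontra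
      have : w'.length = w₀.length := by rw [hcontra]
      omega
    set ψ' := ψ + (Finsupp.single w' q' - Finsupp.single w₀ (ψ w₀)) with hψ'def
    have hval : valL ψ' = valL ψ := by
      rw [hψ'def, _root_.map_add, _root_.map_sub, valL_single, valL_single]
      have h2 : mwc w' 1 * q' = mwc w₀ 1 * ψ w₀ := by
        rw [hq'def, ← mul_assoc, mwc_mul_mwc, one_mul, hwu]
      rw [h2]
      abel
    have hmem' : ∀ w, ψ' w ∈ I.restrictScalars ℝ ⊓ Adeg g d := by
      intro w
      have h1 : ψ' w = ψ w + ((Finsupp.single w' q') w - (Finsupp.single w₀ (ψ w₀)) w) := by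
        rw [hψ'def, Finsupp.add_apply, Finsupp.sub_apply]
      rw [h1]
      refine Submodule.add_mem _ (hmem w) (Submodule.sub_mem _ ?_ ?_)
      · rw [Finsupp.single_apply]
        split
        · exact hq'mem
        · exact Submodule.zero_mem _
      · rw [Finsupp.single_apply]
        split
        · exact hmem w₀
        · exact Submodule.zero_mem _
    have happly : ∀ w, ψ' w = ψ w + ((Finsupp.single w' q') w - (Finsupp.single w₀ (ψ w₀)) w) := by
      intro w
      rw [hψ'def, Finsupp.add_apply, Finsupp.sub_apply]
    have hsupp' : ψ'.support ⊆ insert w' (ψ.support.erase w₀) := by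
      intro w hw
      have hwne : ψ' w ≠ 0 := Finsupp.mem_support_iff.mp hw
      by_contra hcon
      rw [Finset.mem_insert, Finset.mem_erase] at hcon
      push_neg at hcon
      obtain ⟨hne1, hcon2⟩ := hcon
      apply hwne
      rw [happly w]
      by_cases hw0 : w = w₀
      · subst hw0
        rw [Finsupp.single_apply, if_neg hne1.symm]
        rw [Finsupp.single_apply, if_pos rfl]
        abel
      · have : ψ w = 0 := Finsupp.notMem_support_iff.mp (fun hmem2 => (hcon2 hw0) hmem2)
        rw [this, Finsupp.single_apply, if_neg (fun h => hne1 h.symm),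
          Finsupp.single_apply, if_neg (fun h => hw0 h.symm)]
        abel
    have hw₀len_le : w₀.length ≤ ∑ w ∈ ψ.support, w.length :=
      Finset.single_le_sum (fun w _ => Nat.zero_le _) hw₀s
    have hsum_erase : w₀.length + ∑ w ∈ ψ.support.erase w₀, w.length
        = ∑ w ∈ ψ.support, w.length := Finset.add_sum_erase _ _ hw₀s
    have hmeas1 : ∑ w ∈ ψ'.support, w.length
        ≤ ∑ w ∈ insert w' (ψ.support.erase w₀), w.length :=
      Finset.sum_le_sum_of_subset hsupp'
    have hmeas2 : ∑ w ∈ insert w' (ψ.support.erase w₀), w.length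
        ≤ w'.length + ∑ w ∈ ψ.support.erase w₀, w.length := by
      by_cases hmemw' : w' ∈ ψ.support.erase w₀
      · rw [Finset.insert_eq_self.mpr hmemw']
        omega
      · rw [Finset.sum_insert hmemw']
    have hfinal := IH (n - 1) (by omega) ψ' hmem' (by omega) (by rw [hval]; exact hdeg)
    rw [hval] at hfinal
    exact hfinal
  · -- contradiction : a bad term with full degree on top
    exfalso
    push_neg at hmerge
    set B := ψ.support.filter (fun w => D - d < w.length) with hBdef
    have hBne : B.Nonempty := by
      obtain ⟨w, hw, hl⟩ := hgood
      exact ⟨w, Finset.mem_filter.mpr ⟨hw, hl⟩⟩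
    obtain ⟨w₀, hw₀B, hsup⟩ := Finset.exists_mem_eq_sup B hBne FreeMonoid.length
    have hw₀s : w₀ ∈ ψ.support := (Finset.mem_filter.mp hw₀B).1
    have hw₀l : D - d < w₀.length := (Finset.mem_filter.mp hw₀B).2
    have hψw₀ : ψ w₀ ≠ 0 := Finsupp.mem_support_iff.mp hw₀s
    have hdegw₀ : deg (ψ w₀) = d := by
      have h1 : deg (ψ w₀) ≤ d := deg_le_iff.mpr (hmem w₀).2
      have h2 := hmerge w₀ hw₀s hw₀l
      omega
    obtain ⟨v₀, hv₀, hv₀l⟩ := exists_word_deg hψw₀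
    rw [hdegw₀] at hv₀l
    set z := w₀ * v₀ with hzdef
    have hzlen : z.length = w₀.length + d := by
      rw [hzdef, FreeMonoid.length_mul, hv₀l]
    have hz0 : toMA (valL ψ) z = 0 := mem_Adeg_iff.mp hdeg z (by omega)
    have hval2 : toMA (valL ψ) z = ∑ w ∈ ψ.support, toMA (mwc w 1 * ψ w) z := by
      rw [valL_apply, Finsupp.sum, _root_.map_sum, MonoidAlgebra.coeff_sum, Finset.sum_apply']
    have hterm : ∀ w ∈ ψ.support, w ≠ w₀ → toMA (mwc w 1 * ψ w) z = 0 := by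
      intro w hws hne
      by_contra h0
      obtain ⟨u, v, huv, hcu, hcv⟩ := mul_coeff_ne_zero h0
      have hu : u = w := by
        rw [mwc_coeff] at hcu
        by_contra hne'
        rw [if_neg (fun h => hne' h.symm)] at hcu
        exact hcu rfl
      subst hu
      have hvlen : v.length ≤ d := supp_len_of_Adeg (hmem u).2 hcv
      have hzlen2 : z.length = u.length + v.length := by
        rw [huv, FreeMonoid.length_mul]
      by_cases hwB : D - d < u.length
      · have huB : u ∈ B := Finset.mem_filter.mpr ⟨hws, hwB⟩
        have hule : u.length ≤ w₀.length := by
          have := Finset.le_sup (f := FreeMonoid.length) huB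
          omega
        have hueq : u.length = w₀.length := by omega
        have := word_split huv.symm hueq
        exact hne this.1
      · omega
    have hterm₀ : toMA (mwc w₀ 1 * ψ w₀) z = toMA (ψ w₀) v₀ := by
      have hlw : w₀.length = w₀.length := rfl
      have := mul_coeff_left (mwc_mem_AdegH w₀ 1) (ψ w₀) hlw v₀
      rw [hzdef, this, mwc_coeff, if_pos rfl, one_mul]
    have hsum : ∑ w ∈ ψ.support, toMA (mwc w 1 * ψ w) z = toMA (ψ w₀) v₀ := by
      rw [Finset.sum_eq_single_of_mem w₀ hw₀s (fun b hb hbne => hterm b hb hbne), hterm₀]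
    rw [hval2, hsum] at hz0
    exact hv₀ hz0

end Stmt8Aux

namespace Stmt8Aux

variable {g : ℕ}

lemma mem_filtered (I : Submodule (FA g) (FA g)) (S : Set (FA g)) (d : ℕ)
    (hI : I = Submodule.span (FA g) S) (hS : ∀ s ∈ S, s ∈ Adeg g d) {D : ℕ} (hD : d ≤ D)
    {p : FA g} (hp : p ∈ I) (hpD : p ∈ Adeg g D) :
    p ∈ (Adeg g (D - d)) * (I.restrictScalars ℝ ⊓ Adeg g d) := by
  have hVd : S ⊆ ((I.restrictScalars ℝ ⊓ Adeg g d : Submodule ℝ (FA g)) : Set (FA g)) := by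
    intro s hs
    exact ⟨by rw [hI]; exact Submodule.subset_span hs, hS s hs⟩
  have hsp : p ∈ Submodule.span (FA g)
      ((I.restrictScalars ℝ ⊓ Adeg g d : Submodule ℝ (FA g)) : Set (FA g)) := by
    rw [hI] at hp
    exact Submodule.span_mono hVd hp
  obtain ⟨ψ, hψ, rfl⟩ := rep_of_span _ hsp
  exact rep_reduce I d D hD _ ψ hψ le_rfl hpD

lemma ellSet_succ (I : Submodule (FA g) (FA g)) (S : Set (FA g)) (d : ℕ)
    (hI : I = Submodule.span (FA g) S) (hS : ∀ s ∈ S, s ∈ Adeg g d) (k : ℕ) :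
    ellSet (I.restrictScalars ℝ) (d + k)
      = AdegH g k * ellSet (I.restrictScalars ℝ) d := by
  apply le_antisymm
  · intro q hq
    rcases ellSet_mem hq with rfl | ⟨p, hp, hp0, hdeg, rfl⟩
    · exact Submodule.zero_mem _
    have hpA : p ∈ Adeg g (d + k) := by rw [← hdeg]; exact mem_Adeg_deg p
    have hfil := mem_filtered I S d hI hS (by omega) hp hpA
    rw [show d + k - d = k from by omega] at hfil
    rw [lead_eq_hc, hdeg]
    refine Submodule.mul_induction_on
      (C := fun r => hc (d + k) r ∈ AdegH g k * ellSet (I.restrictScalars ℝ) d) hfil ?_ ?_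
    · intro a ha q' hq'
      have h1 : hc (d + k) (a * q') = hc k a * hc d q' := by
        rw [show d + k = k + d from by omega]
        exact hc_top_mul ha hq'.2
      rw [h1]
      by_cases hq'0 : q' = 0
      · rw [hq'0, hc_zero, mul_zero]; exact Submodule.zero_mem _
      by_cases hdq : deg q' = d
      · have h2 : hc d q' = lead q' := by rw [lead_eq_hc, hdq]
        rw [h2]
        exact Submodule.mul_mem_mul (hc_mem_AdegH k a) (lead_mem_ellSet hq'.1 hq'0 hdq)
      · have hlt : deg q' < d := lt_of_le_of_ne (deg_le_iff.mpr hq'.2) hdq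
        rw [hc_eq_zero_of_lt (mem_Adeg_deg q') hlt, mul_zero]
        exact Submodule.zero_mem _
    · intro x y hx hy
      rw [hc_add]
      exact Submodule.add_mem _ hx hy
  · rw [Submodule.mul_le]
    intro h hh lq hlq
    rcases ellSet_mem hlq with rfl | ⟨q, hq, hq0, hdq, rfl⟩
    · rw [mul_zero]; exact Submodule.zero_mem _
    by_cases hh0 : h = 0
    · rw [hh0, zero_mul]; exact Submodule.zero_mem _
    have hqA : q ∈ Adeg g d := by rw [← hdq]; exact mem_Adeg_deg q
    have hz : h * q ∈ I := by
      rw [← smul_eq_mul]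
      exact I.smul_mem _ hq
    have hzA : h * q ∈ Adeg g (k + d) := mul_mem_Adeg (AdegH_le_Adeg hh) hqA
    have hhc : hc (k + d) (h * q) = h * lead q := by
      rw [hc_top_mul (AdegH_le_Adeg hh) hqA, hc_of_mem_AdegH hh, ← hdq, hc_deg_eq_lead]
    have hne : h * lead q ≠ 0 := homog_mul_ne_zero hh hh0 (lead_ne_zero hq0)
    obtain ⟨hdeg', hlead'⟩ := deg_lead_eq_of hzA (by rw [hhc]; exact hne)
    have heq : h * lead q = lead (h * q) := by rw [hlead', hhc]
    rw [heq]
    refine lead_mem_ellSet hz ?_ ?_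
    · intro h0
      exact hne (by rw [← hhc, h0, hc_zero])
    · omega

lemma intersect_key {d m : ℕ} {L : Submodule ℝ (FA g)} (hL : L ≤ AdegH g d)
    {θ : FA g} (hθ₁ : θ ∈ AdegH g (m + d) * L)
    (hθ₂ : θ ∈ L.map (fstarL g) * AdegH g (m + d)) :
    θ ∈ L.map (fstarL g) * AdegH g m * L := by
  have hLs : L.map (fstarL g) ≤ AdegH g d := by
    rintro _ ⟨y, hy, rfl⟩
    exact fstar_mem_AdegH (hL hy)
  obtain ⟨f, hfix, -, hrange⟩ :=
    exists_proj (L := L.map (fstarL g)) (G' := (⊥ : Submodule ℝ (FA g))) disjoint_bot_right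
  have h1 : Oleft f d θ = θ := Oleft_fixes hLs hfix hθ₂
  have h2 : θ ∈ AdegH g d * (AdegH g m * L) := by
    have heq : AdegH g (m + d) * L = AdegH g d * (AdegH g m * L) := by
      rw [show m + d = d + m from by omega, ← AdegH_mul_AdegH d m, mul_assoc]
    rwa [heq] at hθ₁
  have h3 := Oleft_mem (f := f) (le_refl (AdegH g d)) h2
  rw [h1] at h3
  have h4 : (AdegH g d).map f ≤ L.map (fstarL g) := by
    rintro _ ⟨y, hy, rfl⟩
    exact hrange y
  rw [mul_assoc]
  exact mul_le_mul' h4 le_rfl h3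

end Stmt8Aux

namespace Stmt8Aux

variable {g : ℕ}

lemma witness_data {d m N : ℕ} (hNeq : d + m + d = N) {a h' b : FA g}
    (ha : a ∈ Adeg g d) (hh : h' ∈ AdegH g m) (hb : b ∈ Adeg g d) :
    a * h' * b ∈ Adeg g N ∧ hc N (a * h' * b) = hc d a * h' * hc d b := by
  constructor
  · rw [← hNeq]
    exact mul_mem_Adeg (mul_mem_Adeg ha (AdegH_le_Adeg hh)) hb
  · rw [← hNeq, hc_triple ha (AdegH_le_Adeg hh) hb, hc_of_mem_AdegH hh]

lemma fstar_triple (a h' b : FA g) : fstar (a * h' * b) = fstar b * (fstar h' * fstar a) := by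
  rw [fstar_mul, fstar_mul]

/-- membership of an `I`-element in degree-bounded form -/
lemma smul_mem_I {I : Submodule (FA g) (FA g)} {q : FA g} (hq : q ∈ I) (a : FA g) :
    a * q ∈ I := by
  rw [← smul_eq_mul]
  exact I.smul_mem a hq

end Stmt8Aux

namespace Stmt8Aux

variable {g : ℕ}

set_option maxHeartbeats 2000000 in
lemma master (g d D : ℕ) (hD : d ≤ D) (S : Set (FA g)) (hSdeg : ∀ s ∈ S, s ∈ Adeg g d)
    (I : Submodule (FA g) (FA g)) (hI : I = Submodule.span (FA g) S)
    (L G : Submodule ℝ (FA g)) (hLdef : L = ellSet (I.restrictScalars ℝ) d)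
    (hG : G ≤ AdegH g d) (hdisj : Disjoint L G) (hsum : L ⊔ G = AdegH g d) :
    ellSet (I.restrictScalars ℝ ⊔ (I.restrictScalars ℝ).map (fstarL g)) (2 * D) =
        (L.map (fstarL g) * AdegH g (2 * (D - d)) * L) ⊔
          (G.map (fstarL g) * AdegH g (2 * (D - d)) * L) ⊔
          (L.map (fstarL g) * AdegH g (2 * (D - d)) * G) ∧
      (∀ w₁ ∈ L.map (fstarL g) * AdegH g (2 * (D - d)) * L,
        ∀ w₂ ∈ G.map (fstarL g) * AdegH g (2 * (D - d)) * L,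
        ∀ w₃ ∈ L.map (fstarL g) * AdegH g (2 * (D - d)) * G,
          w₁ + w₂ + w₃ = 0 → w₁ = 0 ∧ w₂ = 0 ∧ w₃ = 0) ∧
      AdegH g (2 * D) =
        ellSet (I.restrictScalars ℝ ⊔ (I.restrictScalars ℝ).map (fstarL g)) (2 * D) ⊔
          (G.map (fstarL g) * AdegH g (2 * (D - d)) * G) ∧
      Disjoint (ellSet (I.restrictScalars ℝ ⊔ (I.restrictScalars ℝ).map (fstarL g)) (2 * D))
        (G.map (fstarL g) * AdegH g (2 * (D - d)) * G) := by
  have hL : L ≤ AdegH g d := by rw [hLdef]; exact ellSet_le_AdegH _ _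
  have hLs : L.map (fstarL g) ≤ AdegH g d := by
    rintro _ ⟨y, hy, rfl⟩
    exact fstar_mem_AdegH (hL hy)
  have hGs : G.map (fstarL g) ≤ AdegH g d := by
    rintro _ ⟨y, hy, rfl⟩
    exact fstar_mem_AdegH (hG hy)
  have hsum' : L.map (fstarL g) ⊔ G.map (fstarL g) = AdegH g d := by
    rw [← Submodule.map_sup, hsum, map_fstar_AdegH]
  -- leading spaces of I
  have hIell : ∀ k : ℕ, ellSet (I.restrictScalars ℝ) (d + k) = AdegH g k * L := by
    intro k
    rw [hLdef]
    exact ellSet_succ I S d hI hSdeg k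
  have hIell2D : ellSet (I.restrictScalars ℝ) (2 * D) = AdegH g (d + 2 * (D - d)) * L := by
    have h0 := hIell (d + 2 * (D - d))
    rwa [show d + (d + 2 * (D - d)) = 2 * D from by omega] at h0
  have hIell₁ : ellSet (I.restrictScalars ℝ) (2 * D) ≤
      (L.map (fstarL g) * AdegH g (2 * (D - d)) * L) ⊔
        (G.map (fstarL g) * AdegH g (2 * (D - d)) * L) ⊔
        (L.map (fstarL g) * AdegH g (2 * (D - d)) * G) := by
    rw [hIell2D, ← AdegH_mul_AdegH d (2 * (D - d)), ← hsum', Submodule.sup_mul,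
      Submodule.sup_mul]
    apply sup_le
    · exact le_trans le_sup_left le_sup_left
    · exact le_trans le_sup_right le_sup_left
  have hIell₂ : (ellSet (I.restrictScalars ℝ) (2 * D)).map (fstarL g) ≤
      (L.map (fstarL g) * AdegH g (2 * (D - d)) * L) ⊔
        (G.map (fstarL g) * AdegH g (2 * (D - d)) * L) ⊔
        (L.map (fstarL g) * AdegH g (2 * (D - d)) * G) := by
    rw [hIell2D, map_fstar_mul, map_fstar_AdegH]
    have heq : AdegH g (d + 2 * (D - d)) = AdegH g (2 * (D - d)) * AdegH g d := by
      rw [AdegH_mul_AdegH, show 2 * (D - d) + d = d + 2 * (D - d) from by omega]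
    rw [heq, ← hsum, Submodule.mul_sup, Submodule.mul_sup, ← mul_assoc, ← mul_assoc]
    apply sup_le
    · exact le_trans le_sup_left le_sup_left
    · exact le_sup_right
  -- witness extraction for the three summands
  have hcdL : ∀ y ∈ L, hc d y = y := fun y hy => hc_of_mem_AdegH (hL hy)
  have hz₁ : ∀ (m N : ℕ), d + m + d = N → ∀ θ ∈ L.map (fstarL g) * AdegH g m * L,
      ∃ z, (z ∈ I ∧ fstar z ∈ I) ∧ z ∈ Adeg g N ∧ hc N z = θ := by
    intro m N hNeq
    refine triple_extract _ ⟨Submodule.zero_mem _, by rw [fstar_zero]; exact Submodule.zero_mem _⟩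
      (fun z₁ z₂ h₁ h₂ => ⟨Submodule.add_mem _ h₁.1 h₂.1,
        by rw [fstar_add]; exact Submodule.add_mem _ h₁.2 h₂.2⟩) ?_
    rintro _ ⟨y, hyL, rfl⟩ h' hh ζ hζ
    rcases ellSet_mem (hLdef ▸ hyL) with rfl | ⟨p, hpI, hp0, hdp, rfl⟩
    · exact ⟨0, ⟨Submodule.zero_mem _, by rw [fstar_zero]; exact Submodule.zero_mem _⟩,
        Submodule.zero_mem _, by rw [hc_zero, _root_.map_zero, zero_mul, zero_mul]⟩
    rcases ellSet_mem (hLdef ▸ hζ) with rfl | ⟨q, hqI, hq0, hdq, rfl⟩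
    · exact ⟨0, ⟨Submodule.zero_mem _, by rw [fstar_zero]; exact Submodule.zero_mem _⟩,
        Submodule.zero_mem _, by rw [hc_zero, mul_zero]⟩
    have hpA : fstar p ∈ Adeg g d := fstar_mem_Adeg (by rw [← hdp]; exact mem_Adeg_deg p)
    have hqA : q ∈ Adeg g d := by rw [← hdq]; exact mem_Adeg_deg q
    obtain ⟨hzA, hzc⟩ := witness_data hNeq hpA hh hqA
    refine ⟨fstar p * h' * q, ⟨smul_mem_I hqI _, ?_⟩, hzA, ?_⟩
    · rw [fstar_triple, fstar_fstar, ← mul_assoc]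
      exact smul_mem_I hpI _
    · rw [hzc, hc_fstar, show hc d p = lead p from by rw [← hdp]; rfl,
        show hc d q = lead q from by rw [← hdq]; rfl]
      rfl
  have hz₂ : ∀ (m N : ℕ), d + m + d = N → ∀ θ ∈ G.map (fstarL g) * AdegH g m * L,
      ∃ z, z ∈ I ∧ z ∈ Adeg g N ∧ hc N z = θ := by
    intro m N hNeq
    refine triple_extract _ (Submodule.zero_mem _)
      (fun z₁ z₂ h₁ h₂ => Submodule.add_mem _ h₁ h₂) ?_
    rintro _ ⟨γ, hγG, rfl⟩ h' hh ζ hζ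
    rcases ellSet_mem (hLdef ▸ hζ) with rfl | ⟨q, hqI, hq0, hdq, rfl⟩
    · exact ⟨0, Submodule.zero_mem _, Submodule.zero_mem _, by rw [hc_zero, mul_zero]⟩
    have hγA : fstar γ ∈ Adeg g d := fstar_mem_Adeg (AdegH_le_Adeg (hG hγG))
    have hqA : q ∈ Adeg g d := by rw [← hdq]; exact mem_Adeg_deg q
    obtain ⟨hzA, hzc⟩ := witness_data hNeq hγA hh hqA
    refine ⟨fstar γ * h' * q, smul_mem_I hqI _, hzA, ?_⟩
    rw [hzc, hc_of_mem_AdegH (fstar_mem_AdegH (hG hγG)),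
      show hc d q = lead q from by rw [← hdq]; rfl]
    rfl
  have hz₃ : ∀ (m N : ℕ), d + m + d = N → ∀ θ ∈ L.map (fstarL g) * AdegH g m * G,
      ∃ z, fstar z ∈ I ∧ z ∈ Adeg g N ∧ hc N z = θ := by
    intro m N hNeq
    refine triple_extract _ (by rw [fstar_zero]; exact Submodule.zero_mem _)
      (fun z₁ z₂ h₁ h₂ => by rw [fstar_add]; exact Submodule.add_mem _ h₁ h₂) ?_
    rintro _ ⟨y, hyL, rfl⟩ h' hh γ hγG
    rcases ellSet_mem (hLdef ▸ hyL) with rfl | ⟨p, hpI, hp0, hdp, rfl⟩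
    · exact ⟨0, by rw [fstar_zero]; exact Submodule.zero_mem _, Submodule.zero_mem _,
        by rw [hc_zero, _root_.map_zero, zero_mul, zero_mul]⟩
    have hpA : fstar p ∈ Adeg g d := fstar_mem_Adeg (by rw [← hdp]; exact mem_Adeg_deg p)
    have hγA : γ ∈ Adeg g d := AdegH_le_Adeg (hG hγG)
    obtain ⟨hzA, hzc⟩ := witness_data hNeq hpA hh hγA
    refine ⟨fstar p * h' * γ, ?_, hzA, ?_⟩
    · rw [fstar_triple, fstar_fstar, ← mul_assoc]
      exact smul_mem_I hpI _
    · rw [hzc, hc_fstar, show hc d p = lead p from by rw [← hdp]; rfl,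
        hc_of_mem_AdegH (hG hγG)]
      rfl
  -- part 1, ⊇ direction
  have hJ : ∀ {z : FA g}, z ∈ I →
      z ∈ I.restrictScalars ℝ ⊔ (I.restrictScalars ℝ).map (fstarL g) :=
    fun hz => Submodule.mem_sup_left hz
  have hJ' : ∀ {z : FA g}, fstar z ∈ I →
      z ∈ I.restrictScalars ℝ ⊔ (I.restrictScalars ℝ).map (fstarL g) := by
    intro z hz
    apply Submodule.mem_sup_right
    exact ⟨fstar z, hz, fstar_fstar z⟩
  have hRHS_le : ∀ (X : Submodule ℝ (FA g)),
      (∀ θ ∈ X, ∃ z, (z ∈ I.restrictScalars ℝ ⊔ (I.restrictScalars ℝ).map (fstarL g)) ∧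
        z ∈ Adeg g (2 * D) ∧ hc (2 * D) z = θ) →
      X ≤ ellSet (I.restrictScalars ℝ ⊔ (I.restrictScalars ℝ).map (fstarL g)) (2 * D) := by
    intro X hX θ hθ
    obtain ⟨z, hzJ, hzA, hzc⟩ := hX θ hθ
    by_cases h0 : θ = 0
    · rw [h0]; exact Submodule.zero_mem _
    obtain ⟨hdz, hlz⟩ := deg_lead_eq_of hzA (by rw [hzc]; exact h0)
    rw [show θ = lead z from by rw [hlz, hzc]]
    exact lead_mem_ellSet hzJ (fun hz0 => h0 (by rw [← hzc, hz0, hc_zero])) hdz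
  have hNeq2D : d + 2 * (D - d) + d = 2 * D := by omega
  have part1ge : (L.map (fstarL g) * AdegH g (2 * (D - d)) * L) ⊔
        (G.map (fstarL g) * AdegH g (2 * (D - d)) * L) ⊔
        (L.map (fstarL g) * AdegH g (2 * (D - d)) * G) ≤
      ellSet (I.restrictScalars ℝ ⊔ (I.restrictScalars ℝ).map (fstarL g)) (2 * D) := by
    refine sup_le (sup_le ?_ ?_) ?_
    · refine hRHS_le _ ?_
      intro θ hθ
      obtain ⟨z, ⟨hz1, _⟩, hzA, hzc⟩ := hz₁ _ _ hNeq2D θ hθ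
      exact ⟨z, hJ hz1, hzA, hzc⟩
    · refine hRHS_le _ ?_
      intro θ hθ
      obtain ⟨z, hz1, hzA, hzc⟩ := hz₂ _ _ hNeq2D θ hθ
      exact ⟨z, hJ hz1, hzA, hzc⟩
    · refine hRHS_le _ ?_
      intro θ hθ
      obtain ⟨z, hz1, hzA, hzc⟩ := hz₃ _ _ hNeq2D θ hθ
      exact ⟨z, hJ' hz1, hzA, hzc⟩
  -- part 1, ⊆ direction : the cancellation induction
  have main_sub : ∀ N : ℕ, ∀ u v : FA g, u ∈ I → v ∈ I → deg u ≤ N → deg v ≤ N →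
      u + fstar v ≠ 0 → deg (u + fstar v) = 2 * D →
      lead (u + fstar v) ∈ (L.map (fstarL g) * AdegH g (2 * (D - d)) * L) ⊔
        (G.map (fstarL g) * AdegH g (2 * (D - d)) * L) ⊔
        (L.map (fstarL g) * AdegH g (2 * (D - d)) * G) := by
    intro N
    induction N using Nat.strong_induction_on with
    | _ N IH =>
    intro u v huI hvI hdu hdv hne hdeg2
    by_cases hN : N ≤ 2 * D
    · -- no cancellation at the top
      have huA : u ∈ Adeg g (2 * D) := Adeg_mono (le_trans hdu hN) (mem_Adeg_deg u)
      have hvA : v ∈ Adeg g (2 * D) := Adeg_mono (le_trans hdv hN) (mem_Adeg_deg v)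
      have hsplit : lead (u + fstar v) = hc (2 * D) u + fstar (hc (2 * D) v) := by
        rw [lead_eq_hc, hdeg2, hc_add, hc_fstar]
      rw [hsplit]
      apply Submodule.add_mem
      · by_cases h0 : hc (2 * D) u = 0
        · rw [h0]; exact Submodule.zero_mem _
        · obtain ⟨hdu', hlu'⟩ := deg_lead_eq_of huA h0
          have hu0 : u ≠ 0 := fun h => h0 (by rw [h, hc_zero])
          rw [← hlu']
          exact hIell₁ (lead_mem_ellSet huI hu0 hdu')
      · by_cases h0 : hc (2 * D) v = 0
        · rw [h0, fstar_zero]; exact Submodule.zero_mem _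
        · obtain ⟨hdv', hlv'⟩ := deg_lead_eq_of hvA h0
          have hv0 : v ≠ 0 := fun h => h0 (by rw [h, hc_zero])
          rw [← hlv']
          exact hIell₂ (fstar_mem_map (lead_mem_ellSet hvI hv0 hdv'))
    · -- cancellation at the top
      push_neg at hN
      have hNpos : 1 ≤ N := by omega
      have hθA : u + fstar v ∈ Adeg g (2 * D) := by
        rw [← hdeg2]; exact mem_Adeg_deg _
      have hcancel : hc N u + fstar (hc N v) = 0 := by
        have h1 : hc N (u + fstar v) = 0 := hc_eq_zero_of_lt hθA hN
        rwa [hc_add, hc_fstar] at h1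
      by_cases hlt : deg u < N ∧ deg v < N
      · exact IH (N - 1) (by omega) u v huI hvI (by omega) (by omega) hne hdeg2
      push_neg at hlt
      have hduN : deg u = N := by
        by_contra h1
        have hcu : hc N u = 0 := hc_eq_zero_of_lt (mem_Adeg_deg u) (by omega)
        have hcv : hc N v = 0 := by
          apply fstar_inj
          rw [fstar_zero]
          have := hcancel
          rw [hcu, zero_add] at this
          exact this
        have hdvN : deg v = N := by
          have := hlt (by omega)
          omega
        have hv0 : v ≠ 0 := by
          intro h
          rw [h] at hdvN
          have : deg (0 : FA g) = 0 := by
            rw [deg]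
            simp
          omega
        have : lead v ≠ 0 := lead_ne_zero hv0
        rw [lead_eq_hc, hdvN] at this
        exact this hcv
      have hdvN : deg v = N := by
        by_contra h1
        have hcv : hc N v = 0 := hc_eq_zero_of_lt (mem_Adeg_deg v) (by omega)
        have hcu : hc N u = 0 := by
          have := hcancel
          rw [hcv, fstar_zero, add_zero] at this
          exact this
        have hu0 : u ≠ 0 := by
          intro h
          rw [h] at hduN
          have : deg (0 : FA g) = 0 := by
            rw [deg]
            simp
          omega
        have : lead u ≠ 0 := lead_ne_zero hu0
        rw [lead_eq_hc, hduN] at this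
        exact this hcu
      have hu0 : u ≠ 0 := by
        intro h
        rw [h] at hduN
        have : deg (0 : FA g) = 0 := by rw [deg]; simp
        omega
      have hv0 : v ≠ 0 := by
        intro h
        rw [h] at hdvN
        have : deg (0 : FA g) = 0 := by rw [deg]; simp
        omega
      have hlequ : lead u = hc N u := by rw [lead_eq_hc, hduN]
      have hlev : lead v = hc N v := by rw [lead_eq_hc, hdvN]
      have hdge : 2 * d ≤ N := by omega
      have e1 : ellSet (I.restrictScalars ℝ) N = AdegH g (N - d) * L := by
        have h0 := hIell (N - d)
        rwa [show d + (N - d) = N from by omega] at h0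
      have hθ₁ : lead u ∈ AdegH g ((N - 2 * d) + d) * L := by
        rw [show (N - 2 * d) + d = N - d from by omega, ← e1]
        exact lead_mem_ellSet huI hu0 hduN
      have hθ₂ : lead u ∈ L.map (fstarL g) * AdegH g ((N - 2 * d) + d) := by
        have hv' : lead v ∈ AdegH g (N - d) * L := by
          rw [← e1]
          exact lead_mem_ellSet hvI hv0 hdvN
        have hfv : fstar (lead v) ∈ L.map (fstarL g) * AdegH g (N - d) := by
          have h2 := fstar_mem_map (X := AdegH g (N - d) * L) hv'
          rwa [map_fstar_mul, map_fstar_AdegH] at h2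
        have hlu : lead u = - fstar (lead v) := by
          rw [hlequ, hlev]
          exact eq_neg_of_add_eq_zero_left hcancel
        rw [hlu, show (N - 2 * d) + d = N - d from by omega]
        exact Submodule.neg_mem _ hfv
      have hLU : lead u ∈ L.map (fstarL g) * AdegH g (N - 2 * d) * L :=
        intersect_key hL hθ₁ hθ₂
      obtain ⟨z, ⟨hzI, hzsI⟩, hzA, hzc⟩ :=
        hz₁ (N - 2 * d) N (by omega) (lead u) hLU
      have hu'I : u - z ∈ I := Submodule.sub_mem _ huI hzI
      have hv'I : v + fstar z ∈ I := Submodule.add_mem _ hvI hzsI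
      have hsum_eq : (u - z) + fstar (v + fstar z) = u + fstar v := by
        rw [fstar_add, fstar_fstar]
        abel
      have huzA : u - z ∈ Adeg g N :=
        Submodule.sub_mem _ (by rw [← hduN]; exact mem_Adeg_deg u) hzA
      have hdu' : deg (u - z) ≤ N - 1 := by
        have h0 : hc N (u - z) = 0 := by
          rw [hc_sub, hzc, hlequ, sub_self]
        have := deg_drop huzA h0
        exact le_trans (deg_le_iff.mpr this) le_rfl
      have hvzA : v + fstar z ∈ Adeg g N :=
        Submodule.add_mem _ (by rw [← hdvN]; exact mem_Adeg_deg v) (fstar_mem_Adeg hzA)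
      have hdv' : deg (v + fstar z) ≤ N - 1 := by
        have h0 : hc N (v + fstar z) = 0 := by
          rw [hc_add, hc_fstar, hzc]
          have hlu : lead u = - fstar (lead v) := by
            rw [hlequ, hlev]
            exact eq_neg_of_add_eq_zero_left hcancel
          rw [hlu]
          have hneg : fstar (-(fstar (lead v))) = -(fstar (fstar (lead v))) :=
            _root_.map_neg (fstarL g) _
          rw [hneg, fstar_fstar, hlev]
          abel
        have := deg_drop hvzA h0
        exact le_trans (deg_le_iff.mpr this) le_rfl
      have hres := IH (N - 1) (by omega) (u - z) (v + fstar z) hu'I hv'I hdu' hdv'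
        (by rw [hsum_eq]; exact hne) (by rw [hsum_eq]; exact hdeg2)
      rwa [hsum_eq] at hres
  have part1 : ellSet (I.restrictScalars ℝ ⊔ (I.restrictScalars ℝ).map (fstarL g)) (2 * D) =
      (L.map (fstarL g) * AdegH g (2 * (D - d)) * L) ⊔
        (G.map (fstarL g) * AdegH g (2 * (D - d)) * L) ⊔
        (L.map (fstarL g) * AdegH g (2 * (D - d)) * G) := by
    apply le_antisymm _ part1ge
    intro θ hθ
    rcases ellSet_mem hθ with rfl | ⟨p, hpJ, hp0, hdp, rfl⟩
    · exact Submodule.zero_mem _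
    rw [Submodule.mem_sup] at hpJ
    obtain ⟨u, hu, v', hv', rfl⟩ := hpJ
    obtain ⟨v, hv, rfl⟩ := hv'
    exact main_sub (max (deg u) (deg v)) u v hu hv (le_max_left _ _) (le_max_right _ _)
      hp0 hdp
  refine ⟨part1, ?_, ?_, ?_⟩
  · -- part 2 : directness
    obtain ⟨f₁, f₁fix, f₁kill, f₁range⟩ := exists_proj (map_fstar_disjoint hdisj)
    obtain ⟨f₂, f₂fix, f₂kill, f₂range⟩ := exists_proj hdisj
    intro w₁ hw₁ w₂ hw₂ w₃ hw₃ hsum0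
    have hw₁' := hw₁
    have hw₂' := hw₂
    have hw₃' := hw₃
    rw [mul_assoc] at hw₁' hw₂' hw₃'
    have e₁ : Oleft f₁ d w₁ = w₁ := Oleft_fixes hLs f₁fix hw₁'
    have e₂ : Oleft f₁ d w₂ = 0 := Oleft_kills hGs f₁kill hw₂'
    have e₃ : Oleft f₁ d w₃ = w₃ := Oleft_fixes hLs f₁fix hw₃'
    have h13 : w₁ + w₃ = 0 := by
      have h6 := congrArg (Oleft f₁ d) hsum0
      rwa [_root_.map_add, _root_.map_add, e₁, e₂, e₃, _root_.map_zero, add_zero] at h6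
    have e₄ : Oright f₂ d w₁ = w₁ := Oright_fixes hL f₂fix hw₁
    have e₅ : Oright f₂ d w₃ = 0 := Oright_kills hG f₂kill hw₃
    have hw1z : w₁ = 0 := by
      have h7 := congrArg (Oright f₂ d) h13
      rwa [_root_.map_add, e₄, e₅, add_zero, _root_.map_zero] at h7
    have hw3z : w₃ = 0 := by
      rw [hw1z, zero_add] at h13
      exact h13
    have hw2z : w₂ = 0 := by
      rw [hw1z, hw3z, zero_add, add_zero] at hsum0
      exact hsum0
    exact ⟨hw1z, hw2z, hw3z⟩
  · -- part 3 : complement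
    have hA2D : AdegH g (2 * D) =
        (L.map (fstarL g) ⊔ G.map (fstarL g)) * (AdegH g (2 * (D - d)) * (L ⊔ G)) := by
      rw [hsum', hsum, AdegH_mul_AdegH, AdegH_mul_AdegH,
        show d + (2 * (D - d) + d) = 2 * D from by omega]
    rw [part1, hA2D, Submodule.sup_mul]
    simp only [Submodule.mul_sup]
    simp only [← mul_assoc]
    apply le_antisymm
    · refine sup_le (sup_le ?_ ?_) (sup_le ?_ ?_)
      · exact le_sup_of_le_left (le_sup_of_le_left le_sup_left)
      · exact le_sup_of_le_left le_sup_right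
      · exact le_sup_of_le_left (le_sup_of_le_left le_sup_right)
      · exact le_sup_right
    · refine sup_le (sup_le (sup_le ?_ ?_) ?_) ?_
      · exact le_sup_of_le_left le_sup_left
      · exact le_sup_of_le_right le_sup_left
      · exact le_sup_of_le_left le_sup_right
      · exact le_sup_of_le_right le_sup_right
  · -- part 4 : disjointness
    obtain ⟨f₃, f₃fix, f₃kill, f₃range⟩ := exists_proj (map_fstar_disjoint hdisj).symm
    obtain ⟨f₄, f₄fix, f₄kill, f₄range⟩ := exists_proj hdisj.symm
    rw [Submodule.disjoint_def, part1]
    intro θ hθR hθG'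
    rw [Submodule.mem_sup] at hθR
    obtain ⟨t₁₂, ht₁₂, t₃, ht₃, hsum3⟩ := hθR
    rw [Submodule.mem_sup] at ht₁₂
    obtain ⟨t₁, ht₁, t₂, ht₂, hsum2⟩ := ht₁₂
    have ht₁' := ht₁
    have ht₂' := ht₂
    have ht₃' := ht₃
    have hθGa := hθG'
    rw [mul_assoc] at ht₁' ht₂' ht₃' hθGa
    have e₁ : Oleft f₃ d t₁ = 0 := Oleft_kills hLs f₃kill ht₁'
    have e₂ : Oleft f₃ d t₂ = t₂ := Oleft_fixes hGs f₃fix ht₂'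
    have e₃ : Oleft f₃ d t₃ = 0 := Oleft_kills hLs f₃kill ht₃'
    have eθ : Oleft f₃ d θ = θ := Oleft_fixes hGs f₃fix hθGa
    have hθt₂ : θ = t₂ := by
      have h6 := congrArg (Oleft f₃ d)
        (show t₁ + t₂ + t₃ = θ from by rw [hsum2, hsum3])
      rw [_root_.map_add, _root_.map_add, e₁, e₂, e₃, eθ, zero_add, add_zero] at h6
      exact h6.symm
    have e₄ : Oright f₄ d θ = θ := Oright_fixes hG f₄fix hθG'
    have e₅ : Oright f₄ d θ = 0 :=
      Oright_kills hL f₄kill (by rw [hθt₂]; exact ht₂)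
    exact e₄.symm.trans e₅

end Stmt8Aux

/-- Lemma on the leading space of `I + I*`: with `𝒜^H_d = I^ℓ_d ⊕ G` and `D ≥ d`,
`(I + I*)^ℓ_{2D} = (I^ℓ_d)* 𝒜^H_{2(D−d)} I^ℓ_d ⊕ G* 𝒜^H_{2(D−d)} I^ℓ_d ⊕
(I^ℓ_d)* 𝒜^H_{2(D−d)} G`, and `𝒜^H_{2D} = (I + I*)^ℓ_{2D} ⊕ G* 𝒜^H_{2(D−d)} G`. -/
theorem stmt8 (g d : ℕ) (S : Set (FA g)) (hSdeg : ∀ s ∈ S, s ∈ Adeg g d)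
    (I : Submodule (FA g) (FA g)) (hI : I = Submodule.span (FA g) S)
    (G : Submodule ℝ (FA g)) (hG : G ≤ AdegH g d)
    (hdisj : Disjoint (ellSet (I.restrictScalars ℝ) d) G)
    (hsum : ellSet (I.restrictScalars ℝ) d ⊔ G = AdegH g d)
    (D : ℕ) (hD : d ≤ D) :
    ellSet (I.restrictScalars ℝ ⊔ (I.restrictScalars ℝ).map (fstarL g)) (2 * D) =
        ((ellSet (I.restrictScalars ℝ) d).map (fstarL g) * AdegH g (2 * (D - d)) *
            ellSet (I.restrictScalars ℝ) d) ⊔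
          (G.map (fstarL g) * AdegH g (2 * (D - d)) * ellSet (I.restrictScalars ℝ) d) ⊔
          ((ellSet (I.restrictScalars ℝ) d).map (fstarL g) * AdegH g (2 * (D - d)) * G) ∧
      -- the displayed sum is direct
      (∀ w₁ ∈ (ellSet (I.restrictScalars ℝ) d).map (fstarL g) * AdegH g (2 * (D - d)) *
            ellSet (I.restrictScalars ℝ) d,
        ∀ w₂ ∈ G.map (fstarL g) * AdegH g (2 * (D - d)) * ellSet (I.restrictScalars ℝ) d,
        ∀ w₃ ∈ (ellSet (I.restrictScalars ℝ) d).map (fstarL g) * AdegH g (2 * (D - d)) * G,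
          w₁ + w₂ + w₃ = 0 → w₁ = 0 ∧ w₂ = 0 ∧ w₃ = 0) ∧
      -- consequently `𝒜^H_{2D} = (I + I*)^ℓ_{2D} ⊕ G* 𝒜^H_{2(D−d)} G`
      AdegH g (2 * D) =
        ellSet (I.restrictScalars ℝ ⊔ (I.restrictScalars ℝ).map (fstarL g)) (2 * D) ⊔
          (G.map (fstarL g) * AdegH g (2 * (D - d)) * G) ∧
      Disjoint (ellSet (I.restrictScalars ℝ ⊔ (I.restrictScalars ℝ).map (fstarL g)) (2 * D))
        (G.map (fstarL g) * AdegH g (2 * (D - d)) * G) :=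
  Stmt8Aux.master g d D hD S hSdeg I hI (ellSet (I.restrictScalars ℝ) d) G rfl hG hdisj hsum

end
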